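/- arXiv:1806.04424 — 5 statements merged into one kernel-verified Lean document; each statement's English description precedes it below -/
import Mathlib

section
/- Let q, a, b, c be complex numbers with |q| < 1, |a| < 1, |b| < 1 and |c| ≤ 1. Then ∑_{n=1}^{∞} [∏_{k=0}^{n-1}(a − b q^k)] / ((1 − c q^n) (b;q)_n) = ∑_{m=0}^{∞} [∏_{k=0}^{m-1}(c − b q^k)] / (b;q)_m · ( a q^m/(1 − a q^m) − b q^m/(1 − b q^m) ). (Here ∏_{k=0}^{n-1}(a − b q^k) equals (b/a;q)_n a^n when a ≠ 0 and ∏_{k=0}^{m-1}(c − b q^k) equals (b/c;q)_m c^m when c ≠ 0.) -/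
open Finset

/-- The finite q-Pochhammer symbol `(a;q)_n = ∏_{k=0}^{n-1} (1 - a q^k)`. -/
noncomputable def qPoch (a q : ℂ) (n : ℕ) : ℂ := ∏ k ∈ Finset.range n, (1 - a * q ^ k)

lemma aux_one_sub_ne {z : ℂ} (h : ‖z‖ < 1) : (1:ℂ) - z ≠ 0 := by
  intro h0
  have hz : z = 1 := by linear_combination -h0
  rw [hz] at h; simp at h

lemma aux_exp_le {t t0 : ℝ} (h0 : 0 ≤ t) (h1 : t ≤ t0) (h2 : t0 < 1) :
    Real.exp (-(t/(1-t0))) ≤ 1 - t := by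
  have h3 : (0:ℝ) < 1 - t0 := by linarith
  have key : t/(1-t0) + 1 ≤ Real.exp (t/(1-t0)) := Real.add_one_le_exp _
  have hep : 0 < Real.exp (t/(1-t0)) := Real.exp_pos _
  rw [Real.exp_neg, inv_le_comm₀ hep (by nlinarith [div_nonneg h0 h3.le])]
  have h4 : (1-t) * (t/(1-t0) + 1) ≥ 1 := by
    rw [ge_iff_le, ← sub_nonneg]
    have : (1-t) * (t/(1-t0) + 1) - 1 = t*(t0 - t)/(1-t0) := by field_simp; ring
    rw [this]; exact div_nonneg (mul_nonneg h0 (by linarith)) h3.le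
  rw [inv_le_iff_one_le_mul₀ (by nlinarith [div_nonneg h0 h3.le])]
  nlinarith [div_nonneg h0 h3.le]

lemma geom_sum_bound {r : ℝ} (h0 : 0 ≤ r) (h1 : r < 1) (j : ℕ) :
    ∑ k ∈ range j, r^k ≤ (1-r)⁻¹ := by
  rw [← tsum_geometric_of_lt_one h0 h1]
  exact Summable.sum_le_tsum _ (fun i _ => pow_nonneg h0 i) (summable_geometric_of_lt_one h0 h1)

lemma prod_lower {b q : ℂ} (hb : ‖b‖ < 1) (hq : ‖q‖ < 1)
    {w : ℂ} (hw : ‖w‖ ≤ 1) (j : ℕ) :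
    Real.exp (-(‖b‖ * (1 - ‖q‖)⁻¹ / (1 - ‖b‖)))
      ≤ ‖∏ k ∈ range j, (1 - b * w * q ^ k)‖ := by
  set B := ‖b‖ with hB
  set Q := ‖q‖ with hQ
  have hB0 : 0 ≤ B := norm_nonneg b
  have hQ0 : 0 ≤ Q := norm_nonneg q
  have h1B : (0:ℝ) < 1 - B := by linarith
  have step1 : ∀ k : ℕ, Real.exp (-(B * Q^k/(1-B))) ≤ ‖1 - b*w*q^k‖ := by
    intro k
    have habs : ‖b*w*q^k‖ ≤ B * Q^k := by
      rw [norm_mul, norm_mul, norm_pow]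
      calc B * ‖w‖ * Q^k ≤ B * 1 * Q^k := by
            apply mul_le_mul_of_nonneg_right (mul_le_mul_of_nonneg_left hw hB0) (pow_nonneg hQ0 k)
        _ = B * Q^k := by ring
    have h2 : 1 - B * Q^k ≤ ‖1 - b*w*q^k‖ := by
      have h3 := norm_sub_norm_le (1:ℂ) (b*w*q^k)
      simp only [norm_one] at h3
      linarith
    refine le_trans ?_ h2
    have hBQ : B * Q^k ≤ B := by
      calc B * Q^k ≤ B * 1 := mul_le_mul_of_nonneg_left (pow_le_one₀ hQ0 hq.le) hB0
        _ = B := by ring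
    exact aux_exp_le (by positivity) hBQ hb
  calc Real.exp (-(B * (1-Q)⁻¹/(1-B))) ≤ ∏ k ∈ range j, Real.exp (-(B * Q^k/(1-B))) := by
        rw [← Real.exp_sum]
        apply Real.exp_le_exp.2
        have hs : ∑ k ∈ range j, -(B * Q^k/(1-B)) = -((B * ∑ k ∈ range j, Q^k)/(1-B)) := by
          rw [Finset.mul_sum, Finset.sum_div, Finset.sum_neg_distrib]
        rw [hs, neg_le_neg_iff, div_le_div_iff_of_pos_right h1B]
        exact mul_le_mul_of_nonneg_left (geom_sum_bound hQ0 hq j) hB0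
    _ ≤ ‖∏ k ∈ range j, (1 - b*w*q^k)‖ := by
        rw [norm_prod]
        exact Finset.prod_le_prod (fun k _ => (Real.exp_pos _).le) (fun k _ => step1 k)

lemma P_bound {q a b : ℂ} (hq : ‖q‖ < 1) (ha : ‖a‖ < 1) :
    ∃ C : ℝ, 0 < C ∧ ∃ ρ : ℝ, 0 < ρ ∧ ρ < 1 ∧
      ∀ n : ℕ, ‖∏ k ∈ range n, (a - b * q ^ k)‖ ≤ C * ρ ^ n := by
  set ρ : ℝ := (1 + ‖a‖)/2 with hρdef
  have hρ0 : 0 < ρ := by positivity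
  have hρ1 : ρ < 1 := by rw [hρdef]; linarith
  have hev : ∀ᶠ k in Filter.atTop, ‖b‖ * ‖q‖ ^ k ≤ (1 - ‖a‖)/2 := by
    have ht : Filter.Tendsto (fun k : ℕ => ‖b‖ * ‖q‖ ^ k) Filter.atTop (nhds 0) := by
      have := tendsto_pow_atTop_nhds_zero_of_lt_one (norm_nonneg q) hq
      simpa using this.const_mul (‖b‖)
    exact ht.eventually_le_const (by linarith)
  obtain ⟨K, hK⟩ := Filter.eventually_atTop.1 hev
  set g : ℕ → ℝ := fun k => max (‖a - b * q ^ k‖) ρ with hg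
  have hgρ : ∀ k, ρ ≤ g k := fun k => le_max_right _ _
  have hgK : ∀ k, K ≤ k → g k = ρ := by
    intro k hk
    apply max_eq_right
    calc ‖a - b*q^k‖ ≤ ‖a‖ + ‖b*q^k‖ := by
          have := norm_sub_le a (b*q^k); simpa using this
      _ ≤ ‖a‖ + (1 - ‖a‖)/2 := by
          have := hK k hk; rw [norm_mul, norm_pow]; linarith
      _ = ρ := by rw [hρdef]; ring
  have habsle : ∀ n, ‖∏ k ∈ range n, (a - b*q^k)‖ ≤ ∏ k ∈ range n, g k := by
    intro n
    rw [norm_prod]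
    exact Finset.prod_le_prod (fun k _ => norm_nonneg _) (fun k _ => le_max_left _ _)
  refine ⟨(∏ k ∈ range K, g k) / ρ ^ K, by positivity, ρ, hρ0, hρ1, fun n => ?_⟩
  refine (habsle n).trans ?_
  rcases le_or_gt K n with h | h
  · obtain ⟨d, rfl⟩ := Nat.exists_eq_add_of_le h
    rw [Finset.prod_range_add]
    have : ∏ k ∈ range d, g (K + k) = ρ ^ d := by
      rw [Finset.prod_congr rfl (fun k _ => hgK _ (Nat.le_add_right _ _)), Finset.prod_const,
        Finset.card_range]
    rw [this, pow_add]
    rw [div_mul_eq_mul_div, mul_comm (ρ^K), mul_div_assoc, mul_div_assoc]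
    rw [div_self (by positivity), mul_one]
  · obtain ⟨d, rfl⟩ := Nat.exists_eq_add_of_le h.le
    rw [Finset.prod_range_add, div_mul_eq_mul_div, le_div_iff₀ (pow_pos hρ0 _), pow_add]
    have h2 : ρ ^ d ≤ ∏ k ∈ range d, g (n + k) :=
      calc ρ ^ d = ∏ k ∈ range d, ρ := by rw [Finset.prod_const, Finset.card_range]
        _ ≤ ∏ k ∈ range d, g (n+k) := Finset.prod_le_prod (fun _ _ => hρ0.le) (fun k _ => hgρ _)
    have hP0 : 0 ≤ ∏ k ∈ range n, g k :=
      Finset.prod_nonneg (fun k _ => le_trans hρ0.le (hgρ k))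
    calc (∏ k ∈ range n, g k) * (ρ^n * ρ^d) = ((∏ k ∈ range n, g k) * ρ^d) * ρ^n := by ring
      _ ≤ ((∏ k ∈ range n, g k) * ∏ k ∈ range d, g (n+k)) * ρ^n :=
          mul_le_mul_of_nonneg_right (mul_le_mul_of_nonneg_left h2 hP0) (pow_nonneg hρ0.le n)

lemma Q_bound {q b c : ℂ} (hq : ‖q‖ < 1)
    (hc : ‖c‖ ≤ 1) (m : ℕ) :
    ‖∏ k ∈ range m, (c - b * q ^ k)‖ ≤
      Real.exp (‖b‖ * (1 - ‖q‖)⁻¹) := by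
  rw [norm_prod]
  calc ∏ k ∈ range m, ‖c - b*q^k‖
      ≤ ∏ k ∈ range m, Real.exp (‖b‖ * ‖q‖ ^ k) := by
        apply Finset.prod_le_prod (fun k _ => norm_nonneg _)
        intro k _
        calc ‖c - b*q^k‖ ≤ ‖c‖ + ‖b*q^k‖ := by
              have := norm_sub_le c (b*q^k); simpa using this
          _ ≤ 1 + ‖b‖ * ‖q‖ ^ k := by
              rw [norm_mul, norm_pow]; linarith
          _ ≤ Real.exp (‖b‖ * ‖q‖ ^ k) := by
              have := Real.add_one_le_exp (‖b‖ * ‖q‖ ^ k); linarith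
    _ ≤ Real.exp (‖b‖ * (1 - ‖q‖)⁻¹) := by
        rw [← Real.exp_sum, Real.exp_le_exp, ← Finset.mul_sum]
        exact mul_le_mul_of_nonneg_left (geom_sum_bound (norm_nonneg q) hq m)
          (norm_nonneg b)

lemma L1 {q b c x : ℂ} (hq : ‖q‖ < 1) (hb : ‖b‖ < 1)
    (hc : ‖c‖ ≤ 1) (hx : ‖x‖ < 1) :
    HasSum (fun m : ℕ => (∏ k ∈ range m, (c - b * q ^ k)) * x ^ m /
      (∏ k ∈ range (m+1), (1 - b * x * q ^ k))) (1 / (1 - c * x)) := by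
  set Q : ℕ → ℂ := fun m => ∏ k ∈ range m, (c - b * q ^ k) with hQdef
  set R : ℕ → ℂ := fun j => ∏ k ∈ range j, (1 - b * x * q ^ k) with hRdef
  set δ : ℝ := Real.exp (-(‖b‖ * (1 - ‖q‖)⁻¹ / (1 - ‖b‖))) with hδdef
  set D : ℝ := Real.exp (‖b‖ * (1 - ‖q‖)⁻¹) with hDdef
  have hδ0 : 0 < δ := Real.exp_pos _
  have hRlow : ∀ j, δ ≤ ‖R j‖ := fun j => prod_lower hb hq hx.le j
  have hR0 : ∀ j, R j ≠ 0 := by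
    intro j h0
    have := hRlow j
    rw [h0, norm_zero] at this; linarith
  have hQb : ∀ m, ‖Q m‖ ≤ D := fun m => Q_bound hq hc m
  have hcx : (1 : ℂ) - c * x ≠ 0 := by
    apply aux_one_sub_ne
    rw [norm_mul]
    calc ‖c‖ * ‖x‖ ≤ 1 * ‖x‖ :=
          mul_le_mul_of_nonneg_right hc (norm_nonneg x)
      _ = ‖x‖ := one_mul _
      _ < 1 := hx
  set u : ℕ → ℂ := fun m => Q m * x ^ m / R (m+1) with hudef
  set w : ℕ → ℂ := fun m => Q m * x ^ m / R m with hwdef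
  have hbnd : ∀ m j : ℕ, ‖Q m * x ^ m / R j‖ ≤ D / δ * ‖x‖ ^ m := by
    intro m j
    rw [norm_div, norm_mul, norm_pow, div_le_iff₀ (lt_of_lt_of_le hδ0 (hRlow j))]
    calc ‖Q m‖ * ‖x‖ ^ m ≤ D * ‖x‖ ^ m :=
          mul_le_mul_of_nonneg_right (hQb m) (pow_nonneg (norm_nonneg x) m)
      _ = D / δ * ‖x‖ ^ m * δ := by field_simp
      _ ≤ D / δ * ‖x‖ ^ m * ‖R j‖ :=
          mul_le_mul_of_nonneg_left (hRlow j) (by positivity)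
  have hsu : Summable u := by
    apply Summable.of_norm_bounded (g := fun m => D / δ * ‖x‖ ^ m)
      ((summable_geometric_of_lt_one (norm_nonneg x) hx).mul_left _)
    intro m
    rw [hudef]
    exact hbnd m (m+1)
  have key : ∀ M : ℕ, (1 - c*x) * ∑ m ∈ range M, u m = 1 - w M := by
    intro M
    induction M with
    | zero => simp [hwdef, hQdef, hRdef]
    | succ M ih =>
      rw [Finset.sum_range_succ, mul_add, ih]
      have hstep : (1 - c*x) * u M = w M - w (M+1) := by
        have hRs : R (M+1) = R M * (1 - b * x * q ^ M) := Finset.prod_range_succ _ _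
        have hQs : Q (M+1) = Q M * (c - b * q ^ M) := Finset.prod_range_succ _ _
        have h1 : R M ≠ 0 := hR0 M
        have h2 : (1 : ℂ) - b * x * q ^ M ≠ 0 := by
          intro h0
          have := hR0 (M+1); rw [hRs, h0, mul_zero] at this; exact this rfl
        rw [hudef, hwdef]
        simp only
        rw [hRs, hQs]
        generalize hy : (1 - b * x * q ^ M) = y at h2 ⊢
        field_simp
        linear_combination x ^ M * Q M * hy
      rw [hstep]; ring
  have hw0 : Filter.Tendsto w Filter.atTop (nhds 0) := by
    apply squeeze_zero_norm (fun m => by simpa [hwdef] using hbnd m m)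
    have := tendsto_pow_atTop_nhds_zero_of_lt_one (norm_nonneg x) hx
    simpa using this.const_mul (D / δ)
  have h1 : Filter.Tendsto (fun M => ∑ m ∈ range M, u m) Filter.atTop (nhds (1 / (1 - c*x))) := by
    have h2 : ∀ M, ∑ m ∈ range M, u m = (1 - w M) / (1 - c*x) := by
      intro M
      rw [eq_div_iff hcx, mul_comm, key M]
    rw [funext h2]
    have : Filter.Tendsto (fun M => (1 - w M) / (1 - c*x)) Filter.atTop
        (nhds ((1 - 0) / (1 - c*x))) := ((tendsto_const_nhds.sub hw0)).div_const _
    simpa using this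
  have heq := tendsto_nhds_unique hsu.hasSum.tendsto_sum_nat h1
  rw [← heq]
  exact hsu.hasSum

lemma L2 {q a b x : ℂ} (hq : ‖q‖ < 1) (ha : ‖a‖ < 1)
    (hb : ‖b‖ < 1) (hx : ‖x‖ ≤ 1)
    {C ρ : ℝ} (hC : 0 < C) (hρ0 : 0 < ρ) (hρ1 : ρ < 1)
    (hP : ∀ n : ℕ, ‖∏ k ∈ range n, (a - b * q ^ k)‖ ≤ C * ρ ^ n) :
    HasSum (fun n : ℕ => (∏ k ∈ range (n+1), (a - b * q ^ k)) * x ^ (n+1) /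
      (∏ k ∈ range (n+2), (1 - b * x * q ^ k)))
      ((a - b) * x / ((1 - a * x) * (1 - b * x))) := by
  set P : ℕ → ℂ := fun n => ∏ k ∈ range n, (a - b * q ^ k) with hPdef
  set R : ℕ → ℂ := fun j => ∏ k ∈ range j, (1 - b * x * q ^ k) with hRdef
  set δ : ℝ := Real.exp (-(‖b‖ * (1 - ‖q‖)⁻¹ / (1 - ‖b‖))) with hδdef
  have hδ0 : 0 < δ := Real.exp_pos _
  have hRlow : ∀ j, δ ≤ ‖R j‖ := fun j => prod_lower hb hq hx j
  have hR0 : ∀ j, R j ≠ 0 := by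
    intro j h0
    have := hRlow j
    rw [h0, norm_zero] at this; linarith
  have hax : (1 : ℂ) - a * x ≠ 0 := by
    apply aux_one_sub_ne
    rw [norm_mul]
    calc ‖a‖ * ‖x‖ ≤ ‖a‖ * 1 :=
          mul_le_mul_of_nonneg_left hx (norm_nonneg a)
      _ = ‖a‖ := mul_one _
      _ < 1 := ha
  have hbx : (1 : ℂ) - b * x ≠ 0 := by
    apply aux_one_sub_ne
    rw [norm_mul]
    calc ‖b‖ * ‖x‖ ≤ ‖b‖ * 1 :=
          mul_le_mul_of_nonneg_left hx (norm_nonneg b)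
      _ = ‖b‖ := mul_one _
      _ < 1 := hb
  set t : ℕ → ℂ := fun n => P (n+1) * x ^ (n+1) / R (n+2) with htdef
  set v : ℕ → ℂ := fun n => P n * x ^ n / R n with hvdef
  have hbnd : ∀ n j : ℕ, ‖P n * x ^ n / R j‖ ≤ C / δ * ρ ^ n := by
    intro n j
    rw [norm_div, norm_mul, norm_pow, div_le_iff₀ (lt_of_lt_of_le hδ0 (hRlow j))]
    calc ‖P n‖ * ‖x‖ ^ n ≤ (C * ρ ^ n) * 1 := by
          apply mul_le_mul (hP n) (pow_le_one₀ (norm_nonneg x) hx)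
            (pow_nonneg (norm_nonneg x) n) (by positivity)
      _ = C / δ * ρ ^ n * δ := by field_simp
      _ ≤ C / δ * ρ ^ n * ‖R j‖ :=
          mul_le_mul_of_nonneg_left (hRlow j) (by positivity)
  have hst : Summable t := by
    apply Summable.of_norm_bounded (g := fun n => (C / δ * ρ) * ρ ^ n)
      ((summable_geometric_of_lt_one hρ0.le hρ1).mul_left _)
    intro n
    simp only [htdef]
    calc ‖P (n+1) * x ^ (n+1) / R (n+2)‖ ≤ C / δ * ρ ^ (n+1) := hbnd (n+1) (n+2)
      _ = C / δ * ρ * ρ ^ n := by ring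
  have key : ∀ N : ℕ, (1 - a*x) * ∑ n ∈ range N, t n = v 1 - v (N+1) := by
    intro N
    induction N with
    | zero => simp
    | succ N ih =>
      rw [Finset.sum_range_succ, mul_add, ih]
      have hstep : (1 - a*x) * t N = v (N+1) - v (N+2) := by
        have hRs : R (N+2) = R (N+1) * (1 - b * x * q ^ (N+1)) := Finset.prod_range_succ _ _
        have hPs : P (N+2) = P (N+1) * (a - b * q ^ (N+1)) := Finset.prod_range_succ _ _
        have h1 : R (N+1) ≠ 0 := hR0 (N+1)
        have h2 : (1 : ℂ) - b * x * q ^ (N+1) ≠ 0 := by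
          intro h0
          have := hR0 (N+2); rw [hRs, h0, mul_zero] at this; exact this rfl
        rw [htdef, hvdef]
        simp only
        rw [hRs, hPs]
        generalize hy : (1 - b * x * q ^ (N+1)) = y at h2 ⊢
        generalize P (N+1) = p
        field_simp
        linear_combination x ^ (N+1) * p * hy
      rw [hstep]; ring
  have hv0 : Filter.Tendsto (fun N => v (N+1)) Filter.atTop (nhds 0) := by
    apply squeeze_zero_norm (fun n => by
      simpa [hvdef] using hbnd (n+1) (n+1) :
      ∀ n : ℕ, ‖v (n+1)‖ ≤ C / δ * ρ ^ (n+1))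
    have := tendsto_pow_atTop_nhds_zero_of_lt_one hρ0.le hρ1
    have h2 := (this.const_mul (C / δ)).comp (Filter.tendsto_add_atTop_nat 1)
    rw [mul_zero] at h2
    exact h2
  have hv1 : v 1 = (a - b) * x / (1 - b * x) := by
    rw [hvdef]
    simp [hPdef, hRdef, Finset.prod_range_one]
  have h1 : Filter.Tendsto (fun N => ∑ n ∈ range N, t n) Filter.atTop
      (nhds ((a - b) * x / ((1 - a * x) * (1 - b * x)))) := by
    have h2 : ∀ N, ∑ n ∈ range N, t n = (v 1 - v (N+1)) / (1 - a*x) := by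
      intro N
      rw [eq_div_iff hax, mul_comm, key N]
    rw [funext h2]
    have h3 : Filter.Tendsto (fun N => (v 1 - v (N+1)) / (1 - a*x)) Filter.atTop
        (nhds ((v 1 - 0) / (1 - a*x))) := (tendsto_const_nhds.sub hv0).div_const _
    have h4 : (v 1 - 0) / (1 - a*x) = (a - b) * x / ((1 - a * x) * (1 - b * x)) := by
      rw [sub_zero, hv1, div_div, mul_comm (1 - b*x) (1 - a*x)]
    rw [h4] at h3
    exact h3
  have heq := tendsto_nhds_unique hst.hasSum.tendsto_sum_nat h1
  rw [← heq]
  exact hst.hasSum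

lemma sumF {r ρ C : ℝ} (hr0 : 0 ≤ r) (hr : r < 1) (hρ0 : 0 < ρ) (hρ1 : ρ < 1) :
    Summable (fun p : ℕ × ℕ => C * (ρ ^ (p.1+1) * r ^ ((p.1+1) * p.2))) := by
  apply Summable.mul_left
  rw [summable_prod_of_nonneg (fun p => by positivity)]
  have hpow : ∀ n m : ℕ, ρ ^ (n+1) * r ^ ((n+1) * m) = ρ ^ (n+1) * (r ^ (n+1)) ^ m := by
    intro n m; rw [← pow_mul]
  have hrow : ∀ n : ℕ, Summable (fun m : ℕ => ρ ^ (n+1) * r ^ ((n+1) * m)) := by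
    intro n
    rw [funext (hpow n)]
    exact (summable_geometric_of_lt_one (pow_nonneg hr0 _)
      (pow_lt_one₀ hr0 hr (Nat.succ_ne_zero n))).mul_left _
  refine ⟨fun n => hrow n, ?_⟩
  have hmaj : Summable (fun n : ℕ => (1-r)⁻¹ * ρ ^ (n+1)) := by
    have := (summable_geometric_of_lt_one hρ0.le hρ1).mul_left ((1-r)⁻¹ * ρ)
    refine this.congr ?_
    intro n; ring
  apply Summable.of_nonneg_of_le _ _ hmaj
  · intro n
    exact tsum_nonneg (fun m => by positivity)
  · intro n
    simp only
    rw [funext (hpow n), tsum_mul_left, tsum_geometric_of_lt_one (pow_nonneg hr0 _)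
      (pow_lt_one₀ hr0 hr (Nat.succ_ne_zero n))]
    rw [mul_comm]
    apply mul_le_mul_of_nonneg_right _ (pow_nonneg hρ0.le _)
    apply inv_anti₀ (by linarith)
    have h5 : r ^ (n+1) ≤ r := by
      calc r ^ (n+1) ≤ r ^ 1 := pow_le_pow_of_le_one hr0 hr.le (by omega)
        _ = r := pow_one r
    simp only [Nat.succ_eq_add_one]
    linarith

lemma poch_add (b q : ℂ) (j M : ℕ) :
    qPoch b q (j + M) = qPoch b q j * ∏ k ∈ range M, (1 - b * q ^ j * q ^ k) := by
  unfold qPoch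
  rw [Finset.prod_range_add]
  congr 1
  apply Finset.prod_congr rfl
  intro k _
  rw [pow_add]
  ring

set_option maxHeartbeats 1000000 in
/-- Generalization of Ramanujan's identity (Theorem 2.1, first part):
for |q| < 1, |a| < 1, |b| < 1, |c| ≤ 1,
∑_{n≥1} ∏_{k=0}^{n-1}(a − b q^k) / ((1 − c q^n)(b;q)_n)
  = ∑_{m≥0} ∏_{k=0}^{m-1}(c − b q^k) / (b;q)_m · (a q^m/(1−a q^m) − b q^m/(1−b q^m)). -/
theorem stmt0 (q a b c : ℂ) (hq : ‖q‖ < 1) (ha : ‖a‖ < 1)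
    (hb : ‖b‖ < 1) (hc : ‖c‖ ≤ 1) :
    ∑' n : ℕ, (∏ k ∈ Finset.range (n + 1), (a - b * q ^ k)) /
        ((1 - c * q ^ (n + 1)) * qPoch b q (n + 1)) =
      ∑' m : ℕ, (∏ k ∈ Finset.range m, (c - b * q ^ k)) / qPoch b q m *
        (a * q ^ m / (1 - a * q ^ m) - b * q ^ m / (1 - b * q ^ m)) := by
  obtain ⟨C, hC, ρ, hρ0, hρ1, hP⟩ := P_bound (a := a) (b := b) hq ha
  set δ : ℝ := Real.exp (-(‖b‖ * (1 - ‖q‖)⁻¹ / (1 - ‖b‖))) with hδdef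
  set D : ℝ := Real.exp (‖b‖ * (1 - ‖q‖)⁻¹) with hDdef
  have hδ0 : 0 < δ := Real.exp_pos _
  set P : ℕ → ℂ := fun n => ∏ k ∈ range n, (a - b * q ^ k) with hPdef
  set Qf : ℕ → ℂ := fun m => ∏ k ∈ range m, (c - b * q ^ k) with hQdef
  set F : ℕ × ℕ → ℂ := fun p =>
    P (p.1+1) * Qf p.2 * q ^ ((p.1+1) * p.2) / qPoch b q (p.1+p.2+2) with hFdef
  -- facts about qPoch
  have hpochlow : ∀ j, δ ≤ ‖qPoch b q j‖ := by
    intro j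
    have := prod_lower (w := (1:ℂ)) hb hq (by simp) j
    simpa [qPoch, mul_one] using this
  have hpoch0 : ∀ j, qPoch b q j ≠ 0 := by
    intro j h0
    have := hpochlow j
    rw [h0, norm_zero] at this; linarith
  have hqpow1 : ∀ j : ℕ, ‖q ^ j‖ ≤ 1 :=
    fun j => by rw [norm_pow]; exact pow_le_one₀ (norm_nonneg q) hq.le
  have hqpowlt : ∀ j : ℕ, ‖q ^ (j+1)‖ < 1 :=
    fun j => by rw [norm_pow]; exact pow_lt_one₀ (norm_nonneg q) hq (Nat.succ_ne_zero j)
  -- row sums (for fixed n)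
  have hL : ∀ n : ℕ, HasSum (fun m => F (n, m))
      (P (n+1) / ((1 - c * q ^ (n+1)) * qPoch b q (n+1))) := by
    intro n
    have h1 := L1 (x := q ^ (n+1)) hq hb hc (hqpowlt n)
    have h2 := h1.mul_left (P (n+1) / qPoch b q (n+1))
    have hfun : ∀ m : ℕ, P (n+1) / qPoch b q (n+1) *
        ((∏ k ∈ range m, (c - b * q ^ k)) * (q ^ (n+1)) ^ m /
          (∏ k ∈ range (m+1), (1 - b * q ^ (n+1) * q ^ k))) = F (n, m) := by
      intro m
      have hprod : qPoch b q (n+m+2) =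
          qPoch b q (n+1) * ∏ k ∈ range (m+1), (1 - b * q ^ (n+1) * q ^ k) := by
        have : n+m+2 = (n+1) + (m+1) := by omega
        rw [this, poch_add]
      have hR0 : (∏ k ∈ range (m+1), (1 - b * q ^ (n+1) * q ^ k)) ≠ 0 := by
        intro h0
        have := hpoch0 (n+m+2); rw [hprod, h0, mul_zero] at this; exact this rfl
      rw [hFdef]
      simp only [hQdef]
      rw [hprod, ← pow_mul]
      field_simp
    rw [funext hfun] at h2
    have hval : P (n+1) / qPoch b q (n+1) * (1 / (1 - c * q ^ (n+1))) =
        P (n+1) / ((1 - c * q ^ (n+1)) * qPoch b q (n+1)) := by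
      rw [div_mul_div_comm, mul_one, mul_comm (qPoch b q (n+1))]
    rw [hval] at h2
    exact h2
  -- column sums (for fixed m)
  have hR : ∀ m : ℕ, HasSum (fun n => F (n, m))
      (Qf m / qPoch b q m * (a * q ^ m / (1 - a * q ^ m) - b * q ^ m / (1 - b * q ^ m))) := by
    intro m
    have h1 := L2 (x := q ^ m) hq ha hb (hqpow1 m) hC hρ0 hρ1 hP
    have h2 := h1.mul_left (Qf m / qPoch b q m)
    have hax : (1 : ℂ) - a * q ^ m ≠ 0 := by
      apply aux_one_sub_ne
      rw [norm_mul]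
      calc ‖a‖ * ‖q ^ m‖ ≤ ‖a‖ * 1 :=
            mul_le_mul_of_nonneg_left (hqpow1 m) (norm_nonneg a)
        _ = ‖a‖ := mul_one _
        _ < 1 := ha
    have hbx : (1 : ℂ) - b * q ^ m ≠ 0 := by
      apply aux_one_sub_ne
      rw [norm_mul]
      calc ‖b‖ * ‖q ^ m‖ ≤ ‖b‖ * 1 :=
            mul_le_mul_of_nonneg_left (hqpow1 m) (norm_nonneg b)
        _ = ‖b‖ := mul_one _
        _ < 1 := hb
    have hfun : ∀ n : ℕ, Qf m / qPoch b q m *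
        ((∏ k ∈ range (n+1), (a - b * q ^ k)) * (q ^ m) ^ (n+1) /
          (∏ k ∈ range (n+2), (1 - b * q ^ m * q ^ k))) = F (n, m) := by
      intro n
      have hprod : qPoch b q (n+m+2) =
          qPoch b q m * ∏ k ∈ range (n+2), (1 - b * q ^ m * q ^ k) := by
        have : n+m+2 = m + (n+2) := by omega
        rw [this, poch_add]
      have hR0 : (∏ k ∈ range (n+2), (1 - b * q ^ m * q ^ k)) ≠ 0 := by
        intro h0
        have := hpoch0 (n+m+2); rw [hprod, h0, mul_zero] at this; exact this rfl
      rw [hFdef]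
      simp only [hPdef]
      have hpowe : (q ^ m) ^ (n+1) = q ^ ((n+1) * m) := by
        rw [← pow_mul, mul_comm]
      rw [hprod, hpowe]
      field_simp
    rw [funext hfun] at h2
    have hval : Qf m / qPoch b q m * ((a - b) * q ^ m / ((1 - a * q ^ m) * (1 - b * q ^ m))) =
        Qf m / qPoch b q m * (a * q ^ m / (1 - a * q ^ m) - b * q ^ m / (1 - b * q ^ m)) := by
      congr 1
      field_simp
      ring
    rw [hval] at h2
    exact h2
  -- summability of F
  have hFsum : Summable F := by
    apply Summable.of_norm_bounded
      (g := fun p : ℕ × ℕ => (C * D / δ) * (ρ ^ (p.1+1) * ‖q‖ ^ ((p.1+1) * p.2)))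
      (sumF (norm_nonneg q) hq hρ0 hρ1)
    rintro ⟨n, m⟩
    simp only [hFdef]
    rw [norm_div, norm_mul, norm_mul, norm_pow]
    rw [div_le_iff₀ (lt_of_lt_of_le hδ0 (hpochlow (n+m+2)))]
    have hQb : ‖Qf m‖ ≤ D := Q_bound hq hc m
    calc ‖P (n+1)‖ * ‖Qf m‖ * ‖q‖ ^ ((n+1) * m)
        ≤ (C * ρ ^ (n+1)) * D * ‖q‖ ^ ((n+1) * m) := by
          apply mul_le_mul_of_nonneg_right _ (pow_nonneg (norm_nonneg q) _)
          apply mul_le_mul (hP (n+1)) hQb (norm_nonneg _) (by positivity)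
      _ = (C * D / δ) * (ρ ^ (n+1) * ‖q‖ ^ ((n+1) * m)) * δ := by
          field_simp
      _ ≤ (C * D / δ) * (ρ ^ (n+1) * ‖q‖ ^ ((n+1) * m)) *
            ‖qPoch b q (n+m+2)‖ := by
          apply mul_le_mul_of_nonneg_left (hpochlow (n+m+2)) (by positivity)
  -- conclude
  have hS1 : HasSum (fun n : ℕ => P (n+1) / ((1 - c * q ^ (n+1)) * qPoch b q (n+1)))
      (∑' p : ℕ × ℕ, F p) := hFsum.hasSum.prod_fiberwise hL
  have hFsw : Summable (fun p : ℕ × ℕ => F p.swap) := hFsum.prod_symm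
  have hS2 : HasSum (fun m : ℕ => Qf m / qPoch b q m *
      (a * q ^ m / (1 - a * q ^ m) - b * q ^ m / (1 - b * q ^ m)))
      (∑' p : ℕ × ℕ, F p.swap) := hFsw.hasSum.prod_fiberwise (fun m => hR m)
  have hswap : ∑' p : ℕ × ℕ, F p.swap = ∑' p : ℕ × ℕ, F p :=
    (Equiv.prodComm ℕ ℕ).tsum_eq F
  rw [hS1.tsum_eq, hS2.tsum_eq, hswap]
end

section
/- Let q, z, c be complex numbers with |q| < 1, |zq| < 1 and |c| ≤ 1. Then ∑_{n=1}^{∞} (−1)^{n−1} z^n q^{n(n+1)/2} / ((1 − c q^n) (zq;q)_n) = ∑_{n=1}^{∞} z q^n [∏_{k=1}^{n-1}(c − z q^k)] / (zq;q)_n. (For c ≠ 0 the right-hand side equals (z/c) ∑_{n=1}^{∞} (zq/c;q)_{n-1} (cq)^n / (zq;q)_n.) -/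
open Finset

noncomputable def Lf (q w d : ℂ) (n : ℕ) : ℂ :=
  (-1) ^ n * w ^ (n + 1) * q ^ ((n + 1) * (n + 2) / 2) /
    ((1 - d * q ^ (n + 1)) * qPoch (w * q) q (n + 1))

noncomputable def Rf (q w d : ℂ) (n : ℕ) : ℂ :=
  w * q ^ (n + 1) * (∏ k ∈ Finset.Icc 1 n, (d - w * q ^ k)) / qPoch (w * q) q (n + 1)

lemma one_sub_ne_zero_of_norm_lt {x : ℂ} (h : ‖x‖ < 1) : 1 - x ≠ 0 := by
  intro hx
  have : (1 : ℂ) = x := by linear_combination hx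
  rw [← this] at h; simp at h

lemma norm_one_sub_ge {x : ℂ} : 1 - ‖x‖ ≤ ‖1 - x‖ := by
  calc 1 - ‖x‖ = ‖(1:ℂ)‖ - ‖x‖ := by simp
  _ ≤ ‖1 - x‖ := norm_sub_norm_le _ _

lemma qPoch_succ_first (a q : ℂ) (n : ℕ) :
    qPoch a q (n + 1) = (1 - a) * qPoch (a * q) q n := by
  rw [qPoch, Finset.prod_range_succ', qPoch]
  simp only [pow_zero, mul_one, pow_succ']
  rw [mul_comm]
  congr 1
  exact Finset.prod_congr rfl fun k _ => by ring

lemma qPoch_succ (a q : ℂ) (n : ℕ) :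
    qPoch a q (n + 1) = qPoch a q n * (1 - a * q ^ n) := Finset.prod_range_succ _ _

/-- Weierstrass-type inequality. -/
lemma one_sub_sum_le_prod_one_sub (s : Finset ℕ) (f : ℕ → ℝ)
    (h0 : ∀ i ∈ s, 0 ≤ f i) (h1 : ∀ i ∈ s, f i ≤ 1) :
    1 - ∑ i ∈ s, f i ≤ ∏ i ∈ s, (1 - f i) := by
  classical
  induction s using Finset.induction_on with
  | empty => simp
  | @insert a s hx ih =>
    rw [Finset.sum_insert hx, Finset.prod_insert hx]
    have hfa0 := h0 a (Finset.mem_insert_self a s)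
    have hfa1 := h1 a (Finset.mem_insert_self a s)
    have ihs := ih (fun i hi => h0 i (Finset.mem_insert_of_mem hi))
      (fun i hi => h1 i (Finset.mem_insert_of_mem hi))
    have hs0 : 0 ≤ ∑ i ∈ s, f i := Finset.sum_nonneg fun i hi => h0 i (Finset.mem_insert_of_mem hi)
    nlinarith [ihs, hfa0, hfa1, hs0]

section Consts

variable {qn θ : ℝ}

/-- geometric partial sums over Ico bounded -/
lemma sum_Ico_pow_le (hq0 : 0 ≤ qn) (hq1 : qn < 1) (m n : ℕ) :
    ∑ k ∈ Finset.Ico m n, qn ^ k ≤ qn ^ m * (1 - qn)⁻¹ := by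
  have hsum : Summable (fun k : ℕ => qn ^ k) := summable_geometric_of_lt_one hq0 hq1
  calc ∑ k ∈ Finset.Ico m n, qn ^ k = ∑ k ∈ Finset.range (n - m), qn ^ (m + k) := by
        rw [Finset.sum_Ico_eq_sum_range]
    _ = qn ^ m * ∑ k ∈ Finset.range (n - m), qn ^ k := by
        rw [Finset.mul_sum]; exact Finset.sum_congr rfl fun k _ => by rw [pow_add]
    _ ≤ qn ^ m * (1 - qn)⁻¹ := by
        refine mul_le_mul_of_nonneg_left ?_ (pow_nonneg hq0 m)
        calc ∑ k ∈ Finset.range (n - m), qn ^ k ≤ ∑' k : ℕ, qn ^ k :=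
              Summable.sum_le_tsum _ (fun i _ => pow_nonneg hq0 i) hsum
          _ = (1 - qn)⁻¹ := tsum_geometric_of_lt_one hq0 hq1

lemma exists_C0 (hq0 : 0 ≤ qn) (hq1 : qn < 1) (hθ0 : 0 ≤ θ) (hθ1 : θ < 1) :
    ∃ C : ℝ, 0 < C ∧ ∀ m : ℕ, C ≤ ∏ k ∈ Finset.range m, (1 - θ * qn ^ k) := by
  obtain ⟨m₀, hm₀⟩ := exists_pow_lt_of_lt_one (x := (1 - qn) / 2) (by linarith) hq1
  have hδ : (0:ℝ) < 1 - θ := by linarith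
  have hfac : ∀ k : ℕ, 1 - θ ≤ 1 - θ * qn ^ k := by
    intro k
    have : θ * qn ^ k ≤ θ := by
      calc θ * qn ^ k ≤ θ * 1 := by
            refine mul_le_mul_of_nonneg_left ?_ hθ0
            exact pow_le_one₀ hq0 hq1.le
        _ = θ := mul_one θ
    linarith
  have hfacpos : ∀ k : ℕ, 0 < 1 - θ * qn ^ k := fun k => lt_of_lt_of_le hδ (hfac k)
  have h1q : (0:ℝ) < 1 - qn := by linarith
  refine ⟨(1 - θ) ^ m₀ * (1/2), by positivity, fun m => ?_⟩
  rcases le_or_gt m m₀ with hm | hm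
  · have e1 : (1 - θ) ^ m₀ * (1/2) ≤ (1 - θ) ^ m := by
      have := pow_le_pow_of_le_one hδ.le (by linarith : 1 - θ ≤ 1) hm
      nlinarith [pow_pos hδ m₀, pow_pos hδ m]
    have e2 : (1 - θ) ^ m ≤ ∏ k ∈ Finset.range m, (1 - θ * qn ^ k) := by
      calc (1-θ)^m = ∏ _k ∈ Finset.range m, (1 - θ) := by
            rw [Finset.prod_const, Finset.card_range]
        _ ≤ ∏ k ∈ Finset.range m, (1 - θ * qn ^ k) :=
            Finset.prod_le_prod (fun k _ => hδ.le) (fun k _ => hfac k)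
    linarith
  · rw [← Finset.prod_range_mul_prod_Ico _ hm.le]
    have h1 : (1 - θ) ^ m₀ ≤ ∏ k ∈ Finset.range m₀, (1 - θ * qn ^ k) := by
      calc (1-θ)^m₀ = ∏ _k ∈ Finset.range m₀, (1 - θ) := by
            rw [Finset.prod_const, Finset.card_range]
        _ ≤ _ := Finset.prod_le_prod (fun k _ => hδ.le) (fun k _ => hfac k)
    have h2 : (1:ℝ)/2 ≤ ∏ k ∈ Finset.Ico m₀ m, (1 - θ * qn ^ k) := by
      have hsum : ∑ k ∈ Finset.Ico m₀ m, θ * qn ^ k ≤ 1/2 := by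
        calc ∑ k ∈ Finset.Ico m₀ m, θ * qn ^ k = θ * ∑ k ∈ Finset.Ico m₀ m, qn ^ k := by
              rw [Finset.mul_sum]
          _ ≤ θ * (qn ^ m₀ * (1 - qn)⁻¹) := by
              exact mul_le_mul_of_nonneg_left (sum_Ico_pow_le hq0 hq1 m₀ m) hθ0
          _ ≤ 1 * (qn ^ m₀ * (1 - qn)⁻¹) := by
              refine mul_le_mul_of_nonneg_right hθ1.le ?_
              exact mul_nonneg (pow_nonneg hq0 _) (inv_nonneg.mpr h1q.le)
          _ = qn ^ m₀ * (1 - qn)⁻¹ := one_mul _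
          _ ≤ ((1 - qn)/2) * (1 - qn)⁻¹ := by
              refine mul_le_mul_of_nonneg_right hm₀.le (inv_nonneg.mpr h1q.le)
          _ = 1/2 := by
              field_simp
      have := one_sub_sum_le_prod_one_sub (Finset.Ico m₀ m) (fun k => θ * qn ^ k)
        (fun k _ => by positivity)
        (fun k _ => by have := hfacpos k; linarith)
      linarith
    calc (1 - θ) ^ m₀ * (1/2) ≤ (∏ k ∈ Finset.range m₀, (1 - θ * qn ^ k)) * (1/2) := by
          exact mul_le_mul_of_nonneg_right h1 (by norm_num)
      _ ≤ (∏ k ∈ Finset.range m₀, (1 - θ * qn ^ k)) * ∏ k ∈ Finset.Ico m₀ m, (1 - θ * qn ^ k) := by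
          refine mul_le_mul_of_nonneg_left h2 ?_
          exact Finset.prod_nonneg fun k _ => (hfacpos k).le

end Consts

section Bounds

variable {q w d : ℂ} {θ C0 : ℝ}

lemma norm_wq_pow_le (hw : ‖w * q‖ ≤ θ) (hq1 : ‖q‖ ≤ 1) (k : ℕ) :
    ‖w * q ^ (k + 1)‖ ≤ θ * ‖q‖ ^ k := by
  have : w * q ^ (k+1) = w * q * q ^ k := by ring
  rw [this, norm_mul, norm_pow]
  exact mul_le_mul_of_nonneg_right hw (by positivity)

lemma fac_ne_zero (hw : ‖w * q‖ ≤ θ) (hq1 : ‖q‖ ≤ 1) (hθ1 : θ < 1) (k : ℕ) :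
    1 - w * q ^ (k + 1) ≠ 0 := by
  refine one_sub_ne_zero_of_norm_lt ?_
  calc ‖w * q ^ (k+1)‖ ≤ θ * ‖q‖ ^ k := norm_wq_pow_le hw hq1 k
    _ ≤ θ * 1 := by
        refine mul_le_mul_of_nonneg_left (pow_le_one₀ (norm_nonneg q) hq1) ?_
        exact le_trans (norm_nonneg _) hw
    _ = θ := mul_one θ
    _ < 1 := hθ1

lemma dfac_norm_ge (hd : ‖d‖ ≤ 1) (hq1 : ‖q‖ ≤ 1) (k : ℕ) :
    1 - ‖q‖ ≤ ‖1 - d * q ^ (k + 1)‖ := by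
  have h1 : ‖d * q ^ (k+1)‖ ≤ ‖q‖ := by
    rw [norm_mul, norm_pow]
    calc ‖d‖ * ‖q‖ ^ (k+1) ≤ 1 * ‖q‖ ^ (k+1) := by
          exact mul_le_mul_of_nonneg_right hd (by positivity)
      _ = ‖q‖ ^ (k+1) := one_mul _
      _ ≤ ‖q‖ ^ 1 := pow_le_pow_of_le_one (norm_nonneg q) hq1 (by omega)
      _ = ‖q‖ := pow_one _
  have := norm_one_sub_ge (x := d * q ^ (k+1))
  linarith

lemma dfac_ne_zero (hd : ‖d‖ ≤ 1) (hq1 : ‖q‖ < 1) (k : ℕ) :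
    1 - d * q ^ (k + 1) ≠ 0 := by
  intro h
  have := dfac_norm_ge hd hq1.le k
  rw [h, norm_zero] at this
  linarith

lemma qPoch_norm_ge (hw : ‖w * q‖ ≤ θ) (hq1 : ‖q‖ ≤ 1) (hθ1 : θ < 1)
    (hC0 : ∀ m : ℕ, C0 ≤ ∏ k ∈ Finset.range m, (1 - θ * ‖q‖ ^ k)) (m : ℕ) :
    C0 ≤ ‖qPoch (w * q) q m‖ := by
  have hθ0 : 0 ≤ θ := le_trans (norm_nonneg _) hw
  refine le_trans (hC0 m) ?_
  rw [qPoch, norm_prod]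
  refine Finset.prod_le_prod (fun k _ => ?_) (fun k _ => ?_)
  · have : θ * ‖q‖ ^ k ≤ θ := by
      calc θ * ‖q‖^k ≤ θ * 1 :=
            mul_le_mul_of_nonneg_left (pow_le_one₀ (norm_nonneg q) hq1) hθ0
        _ = θ := mul_one θ
    linarith
  · have h1 : ‖w * q * q ^ k‖ ≤ θ * ‖q‖ ^ k := by
      rw [norm_mul, norm_pow]
      exact mul_le_mul_of_nonneg_right hw (by positivity)
    have := norm_one_sub_ge (x := w * q * q ^ k)
    linarith

lemma qPoch_ne_zero (hw : ‖w * q‖ ≤ θ) (hq1 : ‖q‖ ≤ 1) (hθ1 : θ < 1) (hC0pos : 0 < C0)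
    (hC0 : ∀ m : ℕ, C0 ≤ ∏ k ∈ Finset.range m, (1 - θ * ‖q‖ ^ k)) (m : ℕ) :
    qPoch (w * q) q m ≠ 0 := by
  intro h
  have := qPoch_norm_ge hw hq1 hθ1 hC0 m
  rw [h, norm_zero] at this
  linarith

lemma prod_Icc_norm_le (hw : ‖w * q‖ ≤ θ) (hd : ‖d‖ ≤ 1) (hq1 : ‖q‖ < 1) (n : ℕ) :
    ‖∏ k ∈ Finset.Icc 1 n, (d - w * q ^ k)‖ ≤ Real.exp (θ * (1 - ‖q‖)⁻¹) := by
  have hθ0 : 0 ≤ θ := le_trans (norm_nonneg _) hw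
  rw [norm_prod]
  have step : ∀ k ∈ Finset.Icc 1 n, ‖d - w * q ^ k‖ ≤ Real.exp (θ * ‖q‖ ^ (k - 1)) := by
    intro k hk
    rw [Finset.mem_Icc] at hk
    obtain ⟨j, rfl⟩ : ∃ j, k = j + 1 := ⟨k - 1, by omega⟩
    have h1 : ‖d - w * q ^ (j+1)‖ ≤ 1 + θ * ‖q‖ ^ j := by
      calc ‖d - w * q ^ (j+1)‖ ≤ ‖d‖ + ‖w * q ^ (j+1)‖ := norm_sub_le _ _
        _ ≤ 1 + θ * ‖q‖ ^ j := add_le_add hd (norm_wq_pow_le hw hq1.le j)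
    have h2 : 1 + θ * ‖q‖ ^ j ≤ Real.exp (θ * ‖q‖ ^ j) := by
      have := Real.add_one_le_exp (θ * ‖q‖ ^ j)
      linarith
    simpa using le_trans h1 h2
  calc ∏ k ∈ Finset.Icc 1 n, ‖d - w * q ^ k‖
      ≤ ∏ k ∈ Finset.Icc 1 n, Real.exp (θ * ‖q‖ ^ (k - 1)) :=
        Finset.prod_le_prod (fun k _ => norm_nonneg _) step
    _ = Real.exp (∑ k ∈ Finset.Icc 1 n, θ * ‖q‖ ^ (k - 1)) := (Real.exp_sum _ _).symm
    _ ≤ Real.exp (θ * (1 - ‖q‖)⁻¹) := by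
        refine Real.exp_le_exp.mpr ?_
        rw [← Finset.Ico_add_one_right_eq_Icc, Finset.sum_Ico_eq_sum_range]
        have hn : n + 1 - 1 = n := by omega
        have hk : ∀ k : ℕ, 1 + k - 1 = k := fun k => by omega
        rw [hn]
        calc ∑ k ∈ Finset.range n, θ * ‖q‖ ^ (1 + k - 1)
            = θ * ∑ k ∈ Finset.range n, ‖q‖ ^ k := by
              rw [Finset.mul_sum]
              exact Finset.sum_congr rfl (fun k _ => by rw [hk k])
          _ ≤ θ * (1 - ‖q‖)⁻¹ := by
              refine mul_le_mul_of_nonneg_left ?_ hθ0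
              calc ∑ k ∈ Finset.range n, ‖q‖ ^ k ≤ ∑' k : ℕ, ‖q‖ ^ k :=
                    Summable.sum_le_tsum _ (fun i _ => by positivity)
                      (summable_geometric_of_lt_one (norm_nonneg q) hq1)
                _ = (1 - ‖q‖)⁻¹ := tsum_geometric_of_lt_one (norm_nonneg q) hq1

end Bounds

section Sums

variable {q w d : ℂ} {θ C0 : ℝ}

lemma tri_ge (n : ℕ) : n + 1 ≤ (n + 1) * (n + 2) / 2 := by
  rw [Nat.le_div_iff_mul_le (by norm_num)]
  nlinarith

lemma Lf_norm_le (hw : ‖w * q‖ ≤ θ) (hd : ‖d‖ ≤ 1) (hq1 : ‖q‖ < 1) (hθ1 : θ < 1)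
    (hC0pos : 0 < C0)
    (hC0 : ∀ m : ℕ, C0 ≤ ∏ k ∈ Finset.range m, (1 - θ * ‖q‖ ^ k)) (n : ℕ) :
    ‖Lf q w d n‖ ≤ θ / ((1 - ‖q‖) * C0) * θ ^ n := by
  have hθ0 : 0 ≤ θ := le_trans (norm_nonneg _) hw
  have hnum : ‖(-1 : ℂ) ^ n * w ^ (n + 1) * q ^ ((n + 1) * (n + 2) / 2)‖ ≤ θ ^ (n + 1) := by
    rw [norm_mul, norm_mul, norm_pow, norm_pow, norm_pow, norm_neg, norm_one, one_pow, one_mul]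
    calc ‖w‖ ^ (n+1) * ‖q‖ ^ ((n + 1) * (n + 2) / 2)
        ≤ ‖w‖ ^ (n+1) * ‖q‖ ^ (n+1) := by
          refine mul_le_mul_of_nonneg_left ?_ (by positivity)
          exact pow_le_pow_of_le_one (norm_nonneg q) hq1.le (tri_ge n)
      _ = ‖w * q‖ ^ (n+1) := by rw [norm_mul, mul_pow]
      _ ≤ θ ^ (n+1) := pow_le_pow_left₀ (norm_nonneg _) hw _
  have hden : (1 - ‖q‖) * C0 ≤ ‖(1 - d * q ^ (n + 1)) * qPoch (w * q) q (n + 1)‖ := by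
    rw [norm_mul]
    refine mul_le_mul (dfac_norm_ge hd hq1.le n) (qPoch_norm_ge hw hq1.le hθ1 hC0 (n+1))
      hC0pos.le ?_
    have := dfac_norm_ge hd hq1.le n
    linarith
  rw [Lf, norm_div]
  calc ‖(-1:ℂ) ^ n * w ^ (n + 1) * q ^ ((n + 1) * (n + 2) / 2)‖ /
        ‖(1 - d * q ^ (n + 1)) * qPoch (w * q) q (n + 1)‖
      ≤ θ ^ (n+1) / ((1 - ‖q‖) * C0) := by
        refine div_le_div₀ (by positivity) hnum (mul_pos (by linarith) hC0pos) hden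
    _ = θ / ((1 - ‖q‖) * C0) * θ ^ n := by ring

lemma Rf_norm_le (hw : ‖w * q‖ ≤ θ) (hd : ‖d‖ ≤ 1) (hq1 : ‖q‖ < 1) (hθ1 : θ < 1)
    (hC0pos : 0 < C0)
    (hC0 : ∀ m : ℕ, C0 ≤ ∏ k ∈ Finset.range m, (1 - θ * ‖q‖ ^ k)) (n : ℕ) :
    ‖Rf q w d n‖ ≤ θ * Real.exp (θ * (1 - ‖q‖)⁻¹) / C0 * ‖q‖ ^ n := by
  have hθ0 : 0 ≤ θ := le_trans (norm_nonneg _) hw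
  have hnum : ‖w * q ^ (n + 1) * ∏ k ∈ Finset.Icc 1 n, (d - w * q ^ k)‖ ≤
      θ * ‖q‖ ^ n * Real.exp (θ * (1 - ‖q‖)⁻¹) := by
    rw [norm_mul]
    refine mul_le_mul ?_ (prod_Icc_norm_le hw hd hq1 n) (norm_nonneg _) (by positivity)
    exact norm_wq_pow_le hw hq1.le n
  rw [Rf, norm_div]
  calc ‖w * q ^ (n + 1) * ∏ k ∈ Finset.Icc 1 n, (d - w * q ^ k)‖ /
        ‖qPoch (w * q) q (n + 1)‖
      ≤ (θ * ‖q‖ ^ n * Real.exp (θ * (1 - ‖q‖)⁻¹)) / C0 := by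
        refine div_le_div₀ (by positivity) hnum hC0pos (qPoch_norm_ge hw hq1.le hθ1 hC0 (n+1))
    _ = θ * Real.exp (θ * (1 - ‖q‖)⁻¹) / C0 * ‖q‖ ^ n := by ring

lemma summable_Lf (hw : ‖w * q‖ ≤ θ) (hd : ‖d‖ ≤ 1) (hq1 : ‖q‖ < 1) (hθ1 : θ < 1)
    (hC0pos : 0 < C0)
    (hC0 : ∀ m : ℕ, C0 ≤ ∏ k ∈ Finset.range m, (1 - θ * ‖q‖ ^ k)) :
    Summable (Lf q w d) := by
  have hθ0 : 0 ≤ θ := le_trans (norm_nonneg _) hw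
  refine Summable.of_norm_bounded ?_ (Lf_norm_le hw hd hq1 hθ1 hC0pos hC0)
  exact (summable_geometric_of_lt_one hθ0 hθ1).mul_left _

lemma summable_Rf (hw : ‖w * q‖ ≤ θ) (hd : ‖d‖ ≤ 1) (hq1 : ‖q‖ < 1) (hθ1 : θ < 1)
    (hC0pos : 0 < C0)
    (hC0 : ∀ m : ℕ, C0 ≤ ∏ k ∈ Finset.range m, (1 - θ * ‖q‖ ^ k)) :
    Summable (Rf q w d) := by
  refine Summable.of_norm_bounded ?_ (Rf_norm_le hw hd hq1 hθ1 hC0pos hC0)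
  exact (summable_geometric_of_lt_one (norm_nonneg q) hq1).mul_left _

lemma tsum_Lf_le (hw : ‖w * q‖ ≤ θ) (hd : ‖d‖ ≤ 1) (hq1 : ‖q‖ < 1) (hθ1 : θ < 1)
    (hC0pos : 0 < C0)
    (hC0 : ∀ m : ℕ, C0 ≤ ∏ k ∈ Finset.range m, (1 - θ * ‖q‖ ^ k)) :
    ‖∑' n, Lf q w d n‖ ≤ θ / ((1 - ‖q‖) * C0) * (1 - θ)⁻¹ := by
  have hθ0 : 0 ≤ θ := le_trans (norm_nonneg _) hw
  exact tsum_of_norm_bounded ((hasSum_geometric_of_lt_one hθ0 hθ1).mul_left _)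
    (Lf_norm_le hw hd hq1 hθ1 hC0pos hC0)

lemma tsum_Rf_le (hw : ‖w * q‖ ≤ θ) (hd : ‖d‖ ≤ 1) (hq1 : ‖q‖ < 1) (hθ1 : θ < 1)
    (hC0pos : 0 < C0)
    (hC0 : ∀ m : ℕ, C0 ≤ ∏ k ∈ Finset.range m, (1 - θ * ‖q‖ ^ k)) :
    ‖∑' n, Rf q w d n‖ ≤ θ * Real.exp (θ * (1 - ‖q‖)⁻¹) / C0 * (1 - ‖q‖)⁻¹ := by
  exact tsum_of_norm_bounded
    ((hasSum_geometric_of_lt_one (norm_nonneg q) hq1).mul_left _)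
    (Rf_norm_le hw hd hq1 hθ1 hC0pos hC0)

end Sums

section FE

variable {q w d : ℂ} {θ C0 : ℝ}

lemma tri_succ (n : ℕ) : (n + 1 + 1) * (n + 1 + 2) / 2 = (n + 1) * (n + 2) / 2 + (n + 2) := by
  have h : (n + 1 + 1) * (n + 1 + 2) = (n + 1) * (n + 2) + (n + 2) * 2 := by ring
  rw [h, Nat.add_mul_div_right _ _ (by norm_num : (0:ℕ) < 2)]

lemma FE_L (hw : ‖w * q‖ ≤ θ) (hd : ‖d‖ ≤ 1) (hq1 : ‖q‖ < 1) (hθ1 : θ < 1)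
    (hC0pos : 0 < C0)
    (hC0 : ∀ m : ℕ, C0 ≤ ∏ k ∈ Finset.range m, (1 - θ * ‖q‖ ^ k)) :
    (1 - w * q) * (∑' n, Lf q w d n) + (w * q) * (∑' n, Lf q (w * q) (d * q) n)
      = w * q / (1 - d * q) := by
  have hθ0 : 0 ≤ θ := le_trans (norm_nonneg _) hw
  have hw' : ‖(w * q) * q‖ ≤ θ := by
    rw [norm_mul]
    calc ‖w * q‖ * ‖q‖ ≤ θ * 1 :=
          mul_le_mul hw hq1.le (norm_nonneg _) hθ0
      _ = θ := mul_one θ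
  have hd' : ‖d * q‖ ≤ 1 := by
    rw [norm_mul]
    calc ‖d‖ * ‖q‖ ≤ 1 * 1 := mul_le_mul hd hq1.le (norm_nonneg _) (by norm_num)
      _ = 1 := mul_one 1
  have hwq_ne : 1 - w * q ≠ 0 := by
    have := fac_ne_zero hw hq1.le hθ1 0
    simpa using this
  have hdq_ne : 1 - d * q ≠ 0 := by
    have := dfac_ne_zero hd hq1 0
    simpa using this
  have hsum := summable_Lf hw hd hq1 hθ1 hC0pos hC0
  have hsum' := summable_Lf hw' hd' hq1 hθ1 hC0pos hC0
  have v0 : (1 - w * q) * Lf q w d 0 = w * q / (1 - d * q) := by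
    have h1 : qPoch (w * q) q 1 = 1 - w * q := by
      rw [qPoch, Finset.prod_range_one]; simp
    rw [Lf, h1]
    have hd0 : 1 - d * q ^ (0 + 1) ≠ 0 := by simpa using hdq_ne
    norm_num
    field_simp
  have key : ∀ n, (1 - w * q) * Lf q w d (n + 1) = -(w * q) * Lf q (w * q) (d * q) n := by
    intro n
    have e1 : qPoch (w * q) q (n + 1 + 1) = (1 - w * q) * qPoch (w * q * q) q (n + 1) :=
      qPoch_succ_first _ _ _
    have hqp : qPoch (w * q * q) q (n + 1) ≠ 0 :=
      qPoch_ne_zero (θ := θ) hw' hq1.le hθ1 hC0pos hC0 (n + 1)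
    have hd2 : 1 - d * q ^ (n + 1 + 1) ≠ 0 := dfac_ne_zero hd hq1 (n + 1)
    have hd3 : 1 - (d * q) * q ^ (n + 1) ≠ 0 := by
      have : (d * q) * q ^ (n + 1) = d * q ^ (n + 1 + 1) := by ring
      rw [this]; exact hd2
    rw [Lf, Lf, e1, tri_succ, pow_add]
    rw [show (d * q) * q ^ (n + 1) = d * q ^ (n + 1 + 1) by ring]
    field_simp
    ring
  calc (1 - w * q) * (∑' n, Lf q w d n) + (w * q) * (∑' n, Lf q (w * q) (d * q) n)
      = (∑' n, (1 - w * q) * Lf q w d n) + (w * q) * (∑' n, Lf q (w * q) (d * q) n) := by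
        rw [tsum_mul_left]
    _ = ((1 - w * q) * Lf q w d 0 + ∑' n, (1 - w * q) * Lf q w d (n + 1))
          + (w * q) * (∑' n, Lf q (w * q) (d * q) n) := by
        rw [Summable.tsum_eq_zero_add (hsum.mul_left _)]
    _ = (w * q / (1 - d * q) + ∑' n, -(w * q) * Lf q (w * q) (d * q) n)
          + (w * q) * (∑' n, Lf q (w * q) (d * q) n) := by
        rw [v0, tsum_congr key]
    _ = w * q / (1 - d * q) := by
        rw [tsum_mul_left]
        ring

lemma FE_R (hw : ‖w * q‖ ≤ θ) (hd : ‖d‖ ≤ 1) (hq1 : ‖q‖ < 1) (hθ1 : θ < 1)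
    (hC0pos : 0 < C0)
    (hC0 : ∀ m : ℕ, C0 ≤ ∏ k ∈ Finset.range m, (1 - θ * ‖q‖ ^ k)) :
    (1 - w * q) * (∑' n, Rf q w d n) + (w * q) * (∑' n, Rf q (w * q) (d * q) n)
      = w * q / (1 - d * q) := by
  have hθ0 : 0 ≤ θ := le_trans (norm_nonneg _) hw
  have hw' : ‖(w * q) * q‖ ≤ θ := by
    rw [norm_mul]
    calc ‖w * q‖ * ‖q‖ ≤ θ * 1 :=
          mul_le_mul hw hq1.le (norm_nonneg _) hθ0
      _ = θ := mul_one θ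
  have hd' : ‖d * q‖ ≤ 1 := by
    rw [norm_mul]
    calc ‖d‖ * ‖q‖ ≤ 1 * 1 := mul_le_mul hd hq1.le (norm_nonneg _) (by norm_num)
      _ = 1 := mul_one 1
  have hwq_ne : 1 - w * q ≠ 0 := by
    have := fac_ne_zero hw hq1.le hθ1 0
    simpa using this
  have hdq_ne : 1 - d * q ≠ 0 := by
    have := dfac_ne_zero hd hq1 0
    simpa using this
  have hsum := summable_Rf hw hd hq1 hθ1 hC0pos hC0
  have hsum' := summable_Rf hw' hd' hq1 hθ1 hC0pos hC0
  set P : ℕ → ℂ := fun n => ∏ k ∈ Finset.Icc 1 n, (d - w * q ^ k) with hPdef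
  set u : ℕ → ℂ := fun n => (w * q / (1 - d * q)) * q ^ n * P n / qPoch (w * q * q) q n
    with hudef
  have hQ2ne : ∀ m, qPoch (w * q * q) q m ≠ 0 := fun m =>
    qPoch_ne_zero (θ := θ) hw' hq1.le hθ1 hC0pos hC0 m
  have keyR : ∀ n, (1 - w * q) * Rf q w d n + (w * q) * Rf q (w * q) (d * q) n
      = u n - u (n + 1) := by
    intro n
    have e1 : qPoch (w * q) q (n + 1) = (1 - w * q) * qPoch (w * q * q) q n :=
      qPoch_succ_first _ _ _
    have e2 : qPoch (w * q * q) q (n + 1) = qPoch (w * q * q) q n * (1 - w * q * q * q ^ n) :=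
      qPoch_succ _ _ _
    have eP : P (n + 1) = P n * (d - w * q ^ (n + 1)) :=
      Finset.prod_Icc_succ_top (by omega) _
    have hProd : (∏ k ∈ Finset.Icc 1 n, (d * q - (w * q) * q ^ k)) = q ^ n * P n := by
      have : ∀ k ∈ Finset.Icc 1 n, d * q - (w * q) * q ^ k = q * (d - w * q ^ k) := by
        intro k _; ring
      rw [Finset.prod_congr rfl this, Finset.prod_mul_distrib, Finset.prod_const,
        Nat.card_Icc]
      simp [hPdef]
    have hfacne : 1 - w * q * q * q ^ n ≠ 0 := by
      have := fac_ne_zero hw hq1.le hθ1 (n + 1)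
      have h2 : w * q ^ (n + 1 + 1) = w * q * q * q ^ n := by ring
      rw [h2] at this
      exact this
    have hQ2a : qPoch (w * q ^ 2) q n ≠ 0 := by
      have := hQ2ne n
      rwa [show w * q * q = w * q ^ 2 by ring] at this
    have hfacb : 1 - w * q ^ 2 * q ^ n ≠ 0 := by
      rwa [show w * q * q * q ^ n = w * q ^ 2 * q ^ n by ring] at hfacne
    have hdq_ne' : 1 - q * d ≠ 0 := by
      rwa [show d * q = q * d by ring] at hdq_ne
    rw [Rf, Rf, e1, hProd, hudef]
    simp only
    rw [eP, e2]
    simp only [hPdef]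
    field_simp [hwq_ne, hdq_ne, hQ2ne n, hfacne]
    ring
  have hu0 : u 0 = w * q / (1 - d * q) := by
    simp [hudef, hPdef, qPoch]
  have hutend : Filter.Tendsto u Filter.atTop (nhds 0) := by
    have hC1 : ∀ n, ‖u n‖ ≤ (‖w * q / (1 - d * q)‖ * Real.exp (θ * (1 - ‖q‖)⁻¹) / C0) * ‖q‖ ^ n := by
      intro n
      rw [hudef]
      simp only
      rw [norm_div, norm_mul, norm_mul, norm_pow]
      have hPle : ‖P n‖ ≤ Real.exp (θ * (1 - ‖q‖)⁻¹) := prod_Icc_norm_le hw hd hq1 n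
      have hQ2ge : C0 ≤ ‖qPoch (w * q * q) q n‖ := qPoch_norm_ge hw' hq1.le hθ1 hC0 n
      calc ‖w * q / (1 - d * q)‖ * ‖q‖ ^ n * ‖P n‖ / ‖qPoch (w * q * q) q n‖
          ≤ ‖w * q / (1 - d * q)‖ * ‖q‖ ^ n * Real.exp (θ * (1 - ‖q‖)⁻¹) / C0 := by
            refine div_le_div₀ (by positivity) ?_ hC0pos hQ2ge
            exact mul_le_mul_of_nonneg_left hPle (by positivity)
        _ = (‖w * q / (1 - d * q)‖ * Real.exp (θ * (1 - ‖q‖)⁻¹) / C0) * ‖q‖ ^ n := by ring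
    refine squeeze_zero_norm hC1 ?_
    have := (tendsto_pow_atTop_nhds_zero_of_lt_one (norm_nonneg q) hq1).const_mul
      (‖w * q / (1 - d * q)‖ * Real.exp (θ * (1 - ‖q‖)⁻¹) / C0)
    simpa using this
  have hsumtel : Summable (fun n => u n - u (n + 1)) := by
    have : (fun n => u n - u (n + 1))
        = fun n => (1 - w * q) * Rf q w d n + (w * q) * Rf q (w * q) (d * q) n := by
      funext n; rw [keyR n]
    rw [this]
    exact (hsum.mul_left _).add (hsum'.mul_left _)
  have htel : (∑' n, (u n - u (n + 1))) = w * q / (1 - d * q) := by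
    have hhs : HasSum (fun n => u n - u (n + 1)) (u 0) := by
      rw [hsumtel.hasSum_iff_tendsto_nat]
      have : (fun N => ∑ i ∈ Finset.range N, (u i - u (i + 1))) = fun N => u 0 - u N := by
        funext N; exact Finset.sum_range_sub' u N
      rw [this]
      simpa using (tendsto_const_nhds (x := u 0)).sub hutend
    rw [hhs.tsum_eq, hu0]
  calc (1 - w * q) * (∑' n, Rf q w d n) + (w * q) * (∑' n, Rf q (w * q) (d * q) n)
      = (∑' n, (1 - w * q) * Rf q w d n) + (∑' n, (w * q) * Rf q (w * q) (d * q) n) := by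
        rw [tsum_mul_left, tsum_mul_left]
    _ = ∑' n, ((1 - w * q) * Rf q w d n + (w * q) * Rf q (w * q) (d * q) n) :=
        (Summable.tsum_add (hsum.mul_left _) (hsum'.mul_left _)).symm
    _ = ∑' n, (u n - u (n + 1)) := tsum_congr keyR
    _ = w * q / (1 - d * q) := htel

end FE

/-- Theorem 2.2: for |q| < 1, |zq| < 1, |c| ≤ 1,
∑_{n≥1} (−1)^{n−1} z^n q^{n(n+1)/2} / ((1 − c q^n)(zq;q)_n)
  = ∑_{n≥1} z q^n ∏_{k=1}^{n-1}(c − z q^k) / (zq;q)_n. -/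
theorem stmt2 (q z c : ℂ) (hq : ‖q‖ < 1) (hzq : ‖z * q‖ < 1)
    (hc : ‖c‖ ≤ 1) :
    ∑' n : ℕ, (-1) ^ n * z ^ (n + 1) * q ^ ((n + 1) * (n + 2) / 2) /
        ((1 - c * q ^ (n + 1)) * qPoch (z * q) q (n + 1)) =
      ∑' n : ℕ, z * q ^ (n + 1) * (∏ k ∈ Finset.Icc 1 n, (c - z * q ^ k)) /
        qPoch (z * q) q (n + 1) := by
  have hq' : ‖q‖ < 1 := hq
  have hθ1 : ‖z * q‖ < 1 := hzq
  have hc' : ‖c‖ ≤ 1 := hc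
  set θ : ℝ := ‖z * q‖ with hθdef
  have hθ0 : 0 ≤ θ := norm_nonneg _
  obtain ⟨C0, hC0pos, hC0⟩ := exists_C0 (norm_nonneg q) hq' hθ0 hθ1
  set D : ℂ → ℂ → ℂ := fun w d => (∑' n, Lf q w d n) - (∑' n, Rf q w d n) with hDdef
  have step : ∀ w d : ℂ, ‖w * q‖ ≤ θ → ‖d‖ ≤ 1 →
      D w d = (-(w * q) / (1 - w * q)) * D (w * q) (d * q) := by
    intro w d hw hd
    have hL := FE_L hw hd hq' hθ1 hC0pos hC0
    have hR := FE_R hw hd hq' hθ1 hC0pos hC0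
    have hwq_ne : 1 - w * q ≠ 0 := by
      have := fac_ne_zero hw hq'.le hθ1 0
      simpa using this
    rw [hDdef]
    simp only
    field_simp [hwq_ne]
    rw [mul_comm q d]
    linear_combination hL - hR
  have hargw : ∀ N : ℕ, ‖(z * q ^ N) * q‖ ≤ θ := by
    intro N
    have : (z * q ^ N) * q = (z * q) * q ^ N := by ring
    rw [this, norm_mul, norm_pow]
    calc ‖z * q‖ * ‖q‖ ^ N ≤ ‖z * q‖ * 1 := by
          refine mul_le_mul_of_nonneg_left (pow_le_one₀ (norm_nonneg q) hq'.le) hθ0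
      _ = θ := mul_one _
  have hargd : ∀ N : ℕ, ‖c * q ^ N‖ ≤ 1 := by
    intro N
    rw [norm_mul, norm_pow]
    calc ‖c‖ * ‖q‖ ^ N ≤ 1 * 1 := by
          refine mul_le_mul hc' (pow_le_one₀ (norm_nonneg q) hq'.le) (by positivity) (by norm_num)
      _ = 1 := mul_one 1
  have iter : ∀ N : ℕ, D z c =
      (∏ j ∈ Finset.range N, (-(z * q ^ (j + 1)) / (1 - z * q ^ (j + 1)))) *
        D (z * q ^ N) (c * q ^ N) := by
    intro N
    induction N with
    | zero => simp
    | succ N ih =>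
      rw [Finset.prod_range_succ, ih, step (z * q ^ N) (c * q ^ N) (hargw N) (hargd N)]
      rw [show (z * q ^ N) * q = z * q ^ (N + 1) by ring,
        show (c * q ^ N) * q = c * q ^ (N + 1) by ring]
      ring
  set M : ℝ := θ / ((1 - ‖q‖) * C0) * (1 - θ)⁻¹ +
    θ * Real.exp (θ * (1 - ‖q‖)⁻¹) / C0 * (1 - ‖q‖)⁻¹ with hMdef
  have hM : ∀ w d : ℂ, ‖w * q‖ ≤ θ → ‖d‖ ≤ 1 → ‖D w d‖ ≤ M := by
    intro w d hw hd
    rw [hDdef]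
    simp only
    calc ‖(∑' n, Lf q w d n) - (∑' n, Rf q w d n)‖
        ≤ ‖∑' n, Lf q w d n‖ + ‖∑' n, Rf q w d n‖ := norm_sub_le _ _
      _ ≤ M := by
          rw [hMdef]
          exact add_le_add (tsum_Lf_le hw hd hq' hθ1 hC0pos hC0)
            (tsum_Rf_le hw hd hq' hθ1 hC0pos hC0)
  set F : ℕ → ℂ := fun N => ∏ j ∈ Finset.range N, (-(z * q ^ (j + 1)) / (1 - z * q ^ (j + 1)))
    with hFdef
  have hFtend : Filter.Tendsto F Filter.atTop (nhds 0) := by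
    refine Summable.tendsto_atTop_zero ?_
    refine summable_of_ratio_norm_eventually_le (r := 1/2) (by norm_num) ?_
    have hfacsmall : ∀ᶠ N : ℕ in Filter.atTop,
        ‖-(z * q ^ (N + 1)) / (1 - z * q ^ (N + 1))‖ ≤ 1/2 := by
      have htend : Filter.Tendsto (fun N : ℕ => θ / (1 - θ) * ‖q‖ ^ N) Filter.atTop (nhds 0) := by
        have := (tendsto_pow_atTop_nhds_zero_of_lt_one (norm_nonneg q) hq').const_mul
          (θ / (1 - θ))
        simpa using this
      have hev := htend.eventually_lt_const (by norm_num : (0:ℝ) < 1/2)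
      refine hev.mono ?_
      intro N hN
      have hnum : ‖-(z * q ^ (N + 1))‖ ≤ θ * ‖q‖ ^ N := by
        rw [norm_neg]
        have : z * q ^ (N + 1) = (z * q) * q ^ N := by ring
        rw [this, norm_mul, norm_pow]
      have hden : 1 - θ ≤ ‖1 - z * q ^ (N + 1)‖ := by
        have h1 : ‖z * q ^ (N + 1)‖ ≤ θ := by
          have : z * q ^ (N + 1) = (z * q) * q ^ N := by ring
          rw [this, norm_mul, norm_pow]
          calc ‖z * q‖ * ‖q‖ ^ N ≤ θ * 1 := by
                refine mul_le_mul_of_nonneg_left (pow_le_one₀ (norm_nonneg q) hq'.le) hθ0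
            _ = θ := mul_one _
        have := norm_one_sub_ge (x := z * q ^ (N + 1))
        linarith
      rw [norm_div]
      have hδ : (0:ℝ) < 1 - θ := by linarith
      calc ‖-(z * q ^ (N + 1))‖ / ‖1 - z * q ^ (N + 1)‖
          ≤ (θ * ‖q‖ ^ N) / (1 - θ) := div_le_div₀ (by positivity) hnum hδ hden
        _ = θ / (1 - θ) * ‖q‖ ^ N := by ring
        _ ≤ 1/2 := hN.le
    refine hfacsmall.mono ?_
    intro N hN
    have hrec : F (N + 1) = F N * (-(z * q ^ (N + 1)) / (1 - z * q ^ (N + 1))) := by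
      rw [hFdef]
      exact Finset.prod_range_succ _ _
    rw [hrec, norm_mul, mul_comm (1/2 : ℝ)]
    exact mul_le_mul_of_nonneg_left hN (norm_nonneg _)
  have hDle : ∀ N : ℕ, ‖D z c‖ ≤ ‖F N‖ * M := by
    intro N
    rw [iter N, norm_mul]
    refine mul_le_mul_of_nonneg_left (hM _ _ (hargw N) (hargd N)) (norm_nonneg _)
  have hlim : Filter.Tendsto (fun N => ‖F N‖ * M) Filter.atTop (nhds 0) := by
    have := (hFtend.norm).mul_const M
    simpa using this
  have hD0 : ‖D z c‖ ≤ 0 := ge_of_tendsto hlim (Filter.Eventually.of_forall hDle)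
  have : D z c = 0 := by
    have h := norm_nonneg (D z c)
    have : ‖D z c‖ = 0 := le_antisymm hD0 h
    exact norm_eq_zero.mp this
  have hfin : (∑' n, Lf q z c n) = ∑' n, Rf q z c n := sub_eq_zero.mp this
  exact hfin
end

section
/- For every positive integer n, the following identity holds in the polynomial ring ℤ[c]: ∑_{π ∈ D(n)} (−1)^{#(π)−1} ( ∑_{j=0}^{s(π)−1} c^j ) = ∑_{π ∈ P(n)} c^{l(π)−ν_d(π)} (c−1)^{ν_d(π)−1}. (Equivalently, for complex c ∉ {0,1}: ∑_{π ∈ D(n)} (−1)^{#(π)−1} (c^{s(π)} − 1)/(c − 1) = ∑_{π ∈ P(n)} c^{l(π)−1} (1 − 1/c)^{ν_d(π)−1}.) -/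
open Finset Polynomial

/-- The smallest part of a partition. -/
noncomputable def sPart {n : ℕ} (π : n.Partition) : ℕ := sInf {i | i ∈ π.parts}

/-- The largest part of a partition. -/
def lPart {n : ℕ} (π : n.Partition) : ℕ := π.parts.sup

/-- The number of distinct part values of a partition. -/
def nud {n : ℕ} (π : n.Partition) : ℕ := π.parts.toFinset.card


/-- Gaussian binomial `[N choose a]_q` as a polynomial in `q` over `ℤ[c]`. -/
noncomputable def gb : ℕ → ℕ → Polynomial (Polynomial ℤ)
  | _, 0 => 1
  | 0, _+1 => 0
  | N+1, a+1 => gb N a + X^(a+1) * gb N (a+1)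

lemma gb_zero_right (N : ℕ) : gb N 0 = 1 := by cases N <;> rfl

lemma gb_succ (N a : ℕ) : gb (N+1) (a+1) = gb N a + X^(a+1) * gb N (a+1) := by rw [gb]

lemma gb_eq_zero : ∀ N a, N < a → gb N a = 0
  | _, 0, h => absurd h (Nat.not_lt_zero _)
  | 0, _+1, _ => rfl
  | N+1, a+1, h => by
      rw [gb_succ, gb_eq_zero N a (by omega), gb_eq_zero N (a+1) (by omega)]
      ring

lemma gb_pascal2 : ∀ N, ∀ a, a ≤ N → gb (N+1) (a+1) = X^(N-a) * gb N a + gb N (a+1) := by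
  intro N
  induction N with
  | zero =>
    intro a ha
    interval_cases a
    simp [gb_succ, gb_zero_right, gb_eq_zero 0 1 (by omega)]
  | succ N IH =>
    intro a ha
    match a with
    | 0 =>
      have h1 : gb (N+1) 1 = X^(N-0) * gb N 0 + gb N 1 := IH 0 (Nat.zero_le _)
      rw [Nat.sub_zero] at h1
      have h2 : gb (N+1) 1 = gb N 0 + X^1 * gb N 1 := gb_succ N 0
      rw [gb_zero_right] at h1 h2
      rw [gb_succ, gb_zero_right, Nat.sub_zero]
      -- goal: 1 + X^1 * gb (N+1) 1 = X^(N+1) * 1 + gb (N+1) 1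
      linear_combination (X : Polynomial (Polynomial ℤ))^1 * h1 - h2 + (0:Polynomial (Polynomial ℤ)) * h2
    | (b+1) =>
      by_cases hbN : b + 1 ≤ N
      · obtain ⟨m, hm⟩ : ∃ m, N = b + 1 + m := ⟨N - (b+1), by omega⟩
        subst hm
        have hA1 : gb (b+1+m+1) (b+1) = gb (b+1+m) b + X^(b+1) * gb (b+1+m) (b+1) :=
          gb_succ _ _
        have hA2 : gb (b+1+m+1) (b+1) = X^(m+1) * gb (b+1+m) b + gb (b+1+m) (b+1) := by
          have := IH b (by omega)
          rwa [show b+1+m - b = m+1 by omega] at this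
        have hB1 : gb (b+1+m+1) (b+2) = gb (b+1+m) (b+1) + X^(b+2) * gb (b+1+m) (b+2) :=
          gb_succ _ _
        have hB2 : gb (b+1+m+1) (b+2) = X^m * gb (b+1+m) (b+1) + gb (b+1+m) (b+2) := by
          have := IH (b+1) (by omega)
          rwa [show b+1+m - (b+1) = m by omega] at this
        rw [show b+1+m+1 - (b+1) = m+1 by omega, gb_succ]
        -- goal: gb (b+1+m+1) (b+1) + X^(b+2) * gb (b+1+m+1) (b+2)
        --     = X^(m+1) * gb (b+1+m+1) (b+1) + gb (b+1+m+1) (b+2)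
        linear_combination hA2 - X^(m+1) * hA1 - hB1 + X^(b+2) * hB2
      · have e1 : N + 1 - (b+1) = 0 := by omega
        rw [e1, gb_succ, gb_eq_zero (N+1) (b+2) (by omega)]
        ring
noncomputable def Phi (a : ℕ) : Polynomial (Polynomial ℤ) :=
  ∏ b ∈ Finset.Icc 1 a, (C X - X^b)

noncomputable def Gq (s : ℕ) : Polynomial (Polynomial ℤ) :=
  ∑ j ∈ Finset.range s, (C X)^j

lemma Phi_zero : Phi 0 = 1 := by simp [Phi]

lemma Phi_succ (a : ℕ) : Phi (a+1) = Phi a * (C X - X^(a+1)) :=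
  Finset.prod_Icc_succ_top (by omega) _

lemma Gq_succ' (s : ℕ) : Gq (s+1) = 1 + C X * Gq s := by
  rw [Gq, Finset.sum_range_succ' (fun j => (C X : Polynomial (Polynomial ℤ))^j) s]
  rw [Gq, Finset.mul_sum]
  simp [pow_succ, add_comm, mul_comm]

lemma diamond : ∀ M, ∑ a ∈ Finset.range M, gb M (a+1) * Phi a = Gq M := by
  intro M
  induction M with
  | zero => simp [Gq]
  | succ M IH =>
    have step : ∀ a ∈ Finset.range (M+1), gb (M+1) (a+1) * Phi a
        = gb M a * Phi a + X^(a+1) * gb M (a+1) * Phi a := by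
      intro a _
      rw [gb_succ]; ring
    rw [Finset.sum_congr rfl step, Finset.sum_add_distrib]
    rw [Finset.sum_range_succ' (fun a => gb M a * Phi a) M]
    rw [Finset.sum_range_succ (fun a => X^(a+1) * gb M (a+1) * Phi a) M]
    rw [gb_eq_zero M (M+1) (by omega), gb_zero_right, Phi_zero]
    have merge : ∑ a ∈ Finset.range M, gb M (a+1) * Phi (a+1)
        + ∑ a ∈ Finset.range M, X^(a+1) * gb M (a+1) * Phi a
        = C X * ∑ a ∈ Finset.range M, gb M (a+1) * Phi a := by
      rw [← Finset.sum_add_distrib, Finset.mul_sum]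
      refine Finset.sum_congr rfl fun a _ => ?_
      rw [Phi_succ]; ring
    calc (∑ a ∈ Finset.range M, gb M (a+1) * Phi (a+1)) + 1 * 1
          + (∑ a ∈ Finset.range M, X^(a+1) * gb M (a+1) * Phi a + X^(M+1) * 0 * Phi M)
        = (∑ a ∈ Finset.range M, gb M (a+1) * Phi (a+1)
            + ∑ a ∈ Finset.range M, X^(a+1) * gb M (a+1) * Phi a) + 1 := by ring
      _ = C X * Gq M + 1 := by rw [merge, IH]
      _ = Gq (M+1) := by rw [Gq_succ']; ring

noncomputable def Lq (N : ℕ) : Polynomial (Polynomial ℤ) :=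
  ∑ s ∈ Finset.Icc 1 N, X^s * Gq s * ∏ t ∈ Finset.Icc (s+1) N, (1 - X^t)

noncomputable def Rq (N : ℕ) : Polynomial (Polynomial ℤ) :=
  ∑ a ∈ Finset.range N, X^(a+1) * gb N (a+1) * Phi a

lemma Lq_rec (N : ℕ) : Lq (N+1) = (1 - X^(N+1)) * Lq N + X^(N+1) * Gq (N+1) := by
  rw [Lq, Finset.sum_Icc_succ_top (by omega : 1 ≤ N+1)]
  rw [show Finset.Icc (N+1+1) (N+1) = ∅ from Finset.Icc_eq_empty (by omega)]
  rw [Finset.prod_empty, Lq, Finset.mul_sum]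
  refine congrArg₂ (· + ·) ?_ ?_
  · refine Finset.sum_congr rfl fun s hs => ?_
    rw [Finset.mem_Icc] at hs
    rw [Finset.prod_Icc_succ_top (by omega : s+1 ≤ N+1)]
    ring
  · ring

lemma Rq_rec (N : ℕ) : Rq (N+1) = (1 - X^(N+1)) * Rq N + X^(N+1) * Gq (N+1) := by
  have step : ∀ a ∈ Finset.range (N+1), X^(a+1) * gb (N+1) (a+1) * Phi a
      = X^(N+1) * (gb N a * Phi a) + X^(a+1) * gb N (a+1) * Phi a := by
    intro a ha
    rw [Finset.mem_range] at ha
    rw [gb_pascal2 N a (by omega)]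
    have : (X:Polynomial (Polynomial ℤ))^(a+1) * X^(N-a) = X^(N+1) := by
      rw [← pow_add]; congr 1; omega
    calc X^(a+1) * (X^(N-a) * gb N a + gb N (a+1)) * Phi a
        = (X^(a+1) * X^(N-a)) * (gb N a * Phi a) + X^(a+1) * gb N (a+1) * Phi a := by ring
      _ = X^(N+1) * (gb N a * Phi a) + X^(a+1) * gb N (a+1) * Phi a := by rw [this]
  rw [Rq, Finset.sum_congr rfl step, Finset.sum_add_distrib, ← Finset.mul_sum]
  rw [Finset.sum_range_succ (fun a => X^(a+1) * gb N (a+1) * Phi a) N]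
  rw [gb_eq_zero N (N+1) (by omega)]
  have J : ∑ a ∈ Finset.range (N+1), gb N a * Phi a = Gq (N+1) - Rq N := by
    rw [Finset.sum_range_succ' (fun a => gb N a * Phi a) N, gb_zero_right, Phi_zero]
    have merge : ∀ a ∈ Finset.range N, gb N (a+1) * Phi (a+1)
        = C X * (gb N (a+1) * Phi a) - X^(a+1) * gb N (a+1) * Phi a := by
      intro a _
      rw [Phi_succ]; ring
    rw [Finset.sum_congr rfl merge, Finset.sum_sub_distrib, ← Finset.mul_sum, diamond]
    rw [Gq_succ', Rq]
    ring
  rw [J, Rq]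
  ring

lemma Lq_eq_Rq (N : ℕ) : Lq N = Rq N := by
  induction N with
  | zero =>
    have : Finset.Icc 1 0 = (∅ : Finset ℕ) := Finset.Icc_eq_empty (by omega)
    simp [Lq, Rq, this]
  | succ N IH => rw [Lq_rec, Rq_rec, IH]
/-- partitions of `m` with all parts at most `a`. -/
noncomputable def bounded (m a : ℕ) : Finset (Nat.Partition m) :=
  Finset.univ.filter (fun π => ∀ p ∈ π.parts, p ≤ a)

noncomputable def pc (m a : ℕ) : ℕ := (bounded m a).card

lemma parts_eq_nil (π : Nat.Partition 0) : π.parts = 0 := by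
  rw [Multiset.eq_zero_iff_forall_notMem]
  intro p hp
  have h1 := π.parts_pos hp
  have h2 : p ≤ π.parts.sum := Multiset.single_le_sum (fun x _ => Nat.zero_le x) p hp
  rw [π.parts_sum] at h2
  omega

lemma pc_zero (a : ℕ) : pc 0 a = 1 := by
  rw [pc, bounded]
  rw [Finset.filter_true_of_mem (fun π _ => by rw [parts_eq_nil π]; simp)]
  rw [Finset.card_univ, Fintype.card_eq_one_iff]
  refine ⟨⟨0, by simp, by simp⟩, fun π => Nat.Partition.ext (by rw [parts_eq_nil π])⟩

lemma pc_bot (m : ℕ) (hm : m ≠ 0) : pc m 0 = 0 := by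
  rw [pc, Finset.card_eq_zero, bounded, Finset.filter_eq_empty_iff]
  intro π _ h
  have : π.parts = 0 := by
    rw [Multiset.eq_zero_iff_forall_notMem]
    intro p hp
    have := π.parts_pos hp
    have := h p hp
    omega
  have hs := π.parts_sum
  rw [this, Multiset.sum_zero] at hs
  exact hm hs.symm

lemma pc_succ (m a : ℕ) :
    pc m (a+1) = pc m a + (if a+1 ≤ m then pc (m - (a+1)) (a+1) else 0) := by
  classical
  rw [pc, ← Finset.card_filter_add_card_filter_not
    (p := fun π => (a+1) ∈ π.parts) (s := bounded m (a+1))]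
  have e1 : (bounded m (a+1)).filter (fun π => ¬ (a+1) ∈ π.parts) = bounded m a := by
    ext π
    simp only [bounded, Finset.mem_filter, Finset.mem_univ, true_and]
    constructor
    · rintro ⟨h1, h2⟩ p hp
      have := h1 p hp
      rcases Nat.lt_or_ge p (a+1) with h | h
      · omega
      · exfalso
        apply h2
        have hpa : p = a+1 := by omega
        rw [← hpa]
        exact hp
    · intro h
      refine ⟨fun p hp => le_trans (h p hp) (by omega), fun hmem => by have := h _ hmem; omega⟩
  have e2 : ((bounded m (a+1)).filter (fun π => (a+1) ∈ π.parts)).card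
      = if a+1 ≤ m then pc (m - (a+1)) (a+1) else 0 := by
    split_ifs with hle
    · rw [pc]
      refine Finset.card_bij'
        (i := fun π hπ => ⟨π.parts.erase (a+1), ?_, ?_⟩)
        (j := fun μ hμ => ⟨(a+1) ::ₘ μ.parts, ?_, ?_⟩) ?_ ?_ ?_ ?_
      · intro p hp
        exact π.parts_pos (Multiset.mem_of_mem_erase hp)
      · have hmem : (a+1) ∈ π.parts := (Finset.mem_filter.mp hπ).2
        have := Multiset.cons_erase hmem
        have hsum : ((a+1) ::ₘ π.parts.erase (a+1)).sum = m := by rw [this, π.parts_sum]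
        rw [Multiset.sum_cons] at hsum
        omega
      · intro p hp
        rw [Multiset.mem_cons] at hp
        rcases hp with h | h
        · omega
        · exact μ.parts_pos h
      · rw [Multiset.sum_cons, μ.parts_sum]
        omega
      · intro π hπ
        simp only [bounded, Finset.mem_filter, Finset.mem_univ, true_and]
        intro p hp
        exact (Finset.mem_filter.mp hπ).1 |> fun h =>
          (Finset.mem_filter.mp (Finset.mem_filter.mp hπ).1).2 p (Multiset.mem_of_mem_erase hp)
      · intro μ hμ
        simp only [bounded, Finset.mem_filter, Finset.mem_univ, true_and] at hμ ⊢
        refine ⟨?_, by simp⟩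
        intro p hp
        rw [Multiset.mem_cons] at hp
        rcases hp with h | h
        · omega
        · exact hμ p h
      · intro π hπ
        apply Nat.Partition.ext
        simp only
        exact Multiset.cons_erase (Finset.mem_filter.mp hπ).2
      · intro μ hμ
        apply Nat.Partition.ext
        simp only
        exact Multiset.erase_cons_head _ _
    · rw [Finset.card_eq_zero, Finset.filter_eq_empty_iff]
      intro π hπ hmem
      have : a+1 ≤ π.parts.sum := Multiset.single_le_sum (fun x _ => Nat.zero_le x) _ hmem
      rw [π.parts_sum] at this
      omega
  rw [e1, e2]
  unfold pc
  exact add_comm _ _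

lemma gb_coeff : ∀ N a m, m + a ≤ N → (gb N a).coeff m = (pc m a : Polynomial ℤ) := by
  intro N
  induction N with
  | zero =>
    intro a m h
    have ha : a = 0 := by omega
    have hm : m = 0 := by omega
    subst ha; subst hm
    rw [gb_zero_right, pc_zero]
    simp
  | succ N IH =>
    intro a m h
    match a with
    | 0 =>
      rw [gb_zero_right]
      rcases Nat.eq_zero_or_pos m with hm | hm
      · subst hm; rw [pc_zero]; simp
      · rw [pc_bot m (by omega)]
        simp only [Polynomial.coeff_one, Nat.cast_zero, if_neg (by omega : ¬ m = 0)]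
    | a+1 =>
      rw [gb_succ, Polynomial.coeff_add, mul_comm ((X:Polynomial (Polynomial ℤ))^(a+1)),
        Polynomial.coeff_mul_X_pow']
      rw [IH a m (by omega)]
      rw [pc_succ]
      push_cast
      congr 1
      split_ifs with hle
      · rw [IH (a+1) (m - (a+1)) (by omega)]
      · simp
lemma parts_ne_zero {n : ℕ} (hn : 0 < n) (π : n.Partition) : π.parts ≠ 0 := by
  intro h
  have := π.parts_sum
  rw [h, Multiset.sum_zero] at this
  omega

lemma part_le_n {n : ℕ} (π : n.Partition) {p : ℕ} (hp : p ∈ π.parts) : p ≤ n := by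
  have := Multiset.single_le_sum (fun x _ => Nat.zero_le x) p hp
  rwa [π.parts_sum] at this

lemma sPart_mem {n : ℕ} (hn : 0 < n) (π : n.Partition) : sPart π ∈ π.parts := by
  have hne : {i | i ∈ π.parts}.Nonempty := by
    obtain ⟨a, ha⟩ := Multiset.exists_mem_of_ne_zero (parts_ne_zero hn π)
    exact ⟨a, ha⟩
  exact Nat.sInf_mem hne

lemma sPart_le {n : ℕ} (π : n.Partition) {p : ℕ} (hp : p ∈ π.parts) : sPart π ≤ p :=
  Nat.sInf_le hp

lemma sum_val_eq (F : Finset ℕ) : ∑ t ∈ F, t = F.val.sum := by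
  rw [Finset.sum_eq_multiset_sum, Multiset.map_id']

/-- Expansion of a product of (1 - q^t). -/
lemma prod_one_sub (F : Finset ℕ) :
    ∏ t ∈ F, (1 - X^t : Polynomial (Polynomial ℤ))
      = ∑ T ∈ F.powerset, C ((-1:Polynomial ℤ)^T.card) * X^(∑ t ∈ T, t) := by
  have h1 : ∀ t ∈ F, (1 - X^t : Polynomial (Polynomial ℤ)) = (fun t => -X^t) t + (fun _ => 1) t := by
    intro t _; simp; ring
  rw [Finset.prod_congr rfl h1, Finset.prod_add]
  refine Finset.sum_congr rfl fun T _ => ?_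
  rw [Finset.prod_const_one, mul_one]
  have h2 : ∀ t ∈ T, (-X^t : Polynomial (Polynomial ℤ)) = (-1) * X^t := by intro t _; ring
  rw [Finset.prod_congr rfl h2, Finset.prod_mul_distrib, Finset.prod_const,
    Finset.prod_pow_eq_pow_sum]
  simp

theorem EL (n : ℕ) (hn : 0 < n) :
    ∑ π ∈ Nat.Partition.distincts n,
        (-1 : Polynomial ℤ) ^ (Multiset.card π.parts - 1) *
          ∑ j ∈ Finset.range (sPart π), X ^ j = (Lq n).coeff n := by
  classical
  have expand : (Lq n).coeff n
      = ∑ s ∈ Finset.Icc 1 n, ∑ T ∈ (Finset.Icc (s+1) n).powerset,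
          (if s + ∑ t ∈ T, t = n then (-1:Polynomial ℤ)^T.card * ∑ j ∈ Finset.range s, X^j
           else 0) := by
    rw [Lq, Polynomial.finset_sum_coeff]
    refine Finset.sum_congr rfl fun s hs => ?_
    rw [prod_one_sub, Finset.mul_sum, Polynomial.finset_sum_coeff]
    refine Finset.sum_congr rfl fun T hT => ?_
    have hGq : Gq s = C (∑ j ∈ Finset.range s, X^j) := by
      rw [Gq, map_sum]
      exact Finset.sum_congr rfl fun j _ => (map_pow C X j).symm
    have key : (X^s * Gq s * (C ((-1:Polynomial ℤ)^T.card) * X^(∑ t ∈ T, t))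
        : Polynomial (Polynomial ℤ))
        = C ((-1:Polynomial ℤ)^T.card * ∑ j ∈ Finset.range s, X^j) * X^(s + ∑ t ∈ T, t) := by
      rw [hGq, map_mul, pow_add]
      ring
    rw [key, Polynomial.coeff_C_mul, Polynomial.coeff_X_pow]
    rw [mul_ite, mul_one, mul_zero]
    congr 1
    simp [eq_comm]
  rw [expand]
  have fiber : ∑ π ∈ Nat.Partition.distincts n,
      (-1 : Polynomial ℤ) ^ (Multiset.card π.parts - 1) * ∑ j ∈ Finset.range (sPart π), X ^ j
    = ∑ s ∈ Finset.Icc 1 n, ∑ π ∈ (Nat.Partition.distincts n).filter (fun π => sPart π = s),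
        (-1 : Polynomial ℤ) ^ (Multiset.card π.parts - 1) * ∑ j ∈ Finset.range (sPart π), X ^ j := by
    rw [Finset.sum_fiberwise_of_maps_to]
    intro π _
    rw [Finset.mem_Icc]
    have h1 := π.parts_pos (sPart_mem hn π)
    have h2 := part_le_n π (sPart_mem hn π)
    omega
  rw [fiber]
  refine Finset.sum_congr rfl fun s hs => ?_
  rw [Finset.mem_Icc] at hs
  rw [← Finset.sum_filter]
  refine Finset.sum_bij (i := fun π _ => π.parts.toFinset.erase s) ?_ ?_ ?_ ?_
  · -- maps to
    intro π hπ
    obtain ⟨hdist, hsp⟩ := Finset.mem_filter.mp hπ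
    have hnodup : π.parts.Nodup := by
      rw [Nat.Partition.distincts, Finset.mem_filter] at hdist
      exact hdist.2
    have hsmem : s ∈ π.parts := hsp ▸ sPart_mem hn π
    have hval : π.parts.toFinset.val = π.parts := by
      rw [Multiset.toFinset_val, Multiset.Nodup.dedup hnodup]
    rw [Finset.mem_filter, Finset.mem_powerset]
    constructor
    · intro x hx
      have hxne := Finset.ne_of_mem_erase hx
      have hxmem : x ∈ π.parts := by
        have := Finset.mem_of_mem_erase hx
        rwa [Multiset.mem_toFinset] at this
      rw [Finset.mem_Icc]
      have h1 := sPart_le π hxmem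
      have h2 := part_le_n π hxmem
      omega
    · have e1 : ∑ t ∈ π.parts.toFinset.erase s, t = (π.parts.erase s).sum := by
        rw [sum_val_eq, Finset.erase_val, hval]
      rw [e1]
      have hcons := Multiset.cons_erase hsmem
      have e2 : π.parts.sum = s + (π.parts.erase s).sum := by
        conv_lhs => rw [← hcons]
        rw [Multiset.sum_cons]
      rw [π.parts_sum] at e2
      omega
  · -- injective
    intro π1 h1 π2 h2 heq
    have recover : ∀ π ∈ (Nat.Partition.distincts n).filter (fun π => sPart π = s),
        π.parts = s ::ₘ (π.parts.toFinset.erase s).val := by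
      intro π hπ
      obtain ⟨hdist, hsp⟩ := Finset.mem_filter.mp hπ
      have hnodup : π.parts.Nodup := by
        rw [Nat.Partition.distincts, Finset.mem_filter] at hdist
        exact hdist.2
      have hsmem : s ∈ π.parts := hsp ▸ sPart_mem hn π
      have hval : π.parts.toFinset.val = π.parts := by
        rw [Multiset.toFinset_val, Multiset.Nodup.dedup hnodup]
      rw [Finset.erase_val, hval, Multiset.cons_erase hsmem]
    have heq' : π1.parts.toFinset.erase s = π2.parts.toFinset.erase s := heq
    apply Nat.Partition.ext
    rw [recover π1 h1, recover π2 h2, heq']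
  · -- surjective
    intro T hT
    obtain ⟨hpow, hsum⟩ := Finset.mem_filter.mp hT
    have hsub := Finset.mem_powerset.mp hpow
    have hTbig : ∀ x ∈ T, s + 1 ≤ x := fun x hx => (Finset.mem_Icc.mp (hsub hx)).1
    have hsnotin : s ∉ T.val := fun hmem => by have := hTbig s hmem; omega
    refine ⟨⟨s ::ₘ T.val, ?_, ?_⟩, ?_, ?_⟩
    · intro x hx
      rw [Multiset.mem_cons] at hx
      rcases hx with rfl | hx
      · omega
      · have := hTbig x hx; omega
    · rw [Multiset.sum_cons, ← sum_val_eq]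
      exact hsum
    · rw [Finset.mem_filter]
      constructor
      · rw [Nat.Partition.distincts, Finset.mem_filter]
        refine ⟨Finset.mem_univ _, ?_⟩
        rw [Multiset.nodup_cons]
        exact ⟨hsnotin, T.nodup⟩
      · apply le_antisymm
        · exact Nat.sInf_le (Multiset.mem_cons_self s T.val)
        · have hmem := Nat.sInf_mem (⟨s, Multiset.mem_cons_self s T.val⟩ :
            Set.Nonempty {i | i ∈ s ::ₘ T.val})
          rw [Set.mem_setOf_eq, Multiset.mem_cons] at hmem
          show s ≤ sInf {i | i ∈ s ::ₘ T.val}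
          rcases hmem with h | h
          · omega
          · have := hTbig _ (Finset.mem_def.mpr h); omega
    · -- erase gives back T
      have hsT : s ∉ T := fun h => hsnotin (Finset.mem_def.mp h)
      simp only
      rw [Multiset.toFinset_cons, Finset.val_toFinset, Finset.erase_insert hsT]
  · -- values agree
    intro π hπ
    obtain ⟨hdist, hsp⟩ := Finset.mem_filter.mp hπ
    have hnodup : π.parts.Nodup := by
      rw [Nat.Partition.distincts, Finset.mem_filter] at hdist
      exact hdist.2
    have hsmem : s ∈ π.parts.toFinset := Multiset.mem_toFinset.mpr (hsp ▸ sPart_mem hn π)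
    rw [hsp, Finset.card_erase_of_mem hsmem, Multiset.toFinset_card_of_nodup hnodup]
lemma sum_Icc_one {M : Type*} [AddCommMonoid M] (n : ℕ) (f : ℕ → M) :
    ∑ a ∈ Finset.Icc 1 n, f a = ∑ a ∈ Finset.range n, f (a+1) := by
  rw [← Finset.Ico_add_one_right_eq_Icc, Finset.sum_Ico_eq_sum_range]
  simp [add_comm]

lemma msup_mem (s : Multiset ℕ) (h : s ≠ 0) : s.sup ∈ s := by
  induction s using Multiset.induction with
  | empty => exact absurd rfl h
  | cons a t ih =>
    rw [Multiset.sup_cons]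
    rcases eq_or_ne t 0 with rfl | ht
    · simp
    · rcases le_total t.sup a with hle | hle
      · rw [sup_eq_left.mpr hle]
        exact Multiset.mem_cons_self a t
      · rw [sup_eq_right.mpr hle]
        exact Multiset.mem_cons_of_mem (ih ht)

lemma lPart_mem {n : ℕ} (hn : 0 < n) (π : n.Partition) : lPart π ∈ π.parts :=
  msup_mem _ (parts_ne_zero hn π)

lemma lPart_ub {n : ℕ} (π : n.Partition) {p : ℕ} (hp : p ∈ π.parts) : p ≤ lPart π :=
  Multiset.le_sup hp

lemma nud_le_lPart {n : ℕ} (π : n.Partition) : nud π ≤ lPart π := by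
  have hsub : π.parts.toFinset ⊆ Finset.Icc 1 (lPart π) := by
    intro x hx
    rw [Multiset.mem_toFinset] at hx
    rw [Finset.mem_Icc]
    exact ⟨π.parts_pos hx, lPart_ub π hx⟩
  have := Finset.card_le_card hsub
  rwa [Nat.card_Icc, Nat.add_sub_cancel] at this

lemma ER1 {n : ℕ} (hn : 0 < n) (π : n.Partition) :
    (X : Polynomial ℤ)^(lPart π - nud π) * (X - 1)^(nud π - 1)
      = ∑ M ∈ (π.parts.toFinset.erase (lPart π)).powerset,
          ((-1:Polynomial ℤ)^M.card * X^(lPart π - 1 - M.card)) := by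
  have hlV : lPart π ∈ π.parts.toFinset := Multiset.mem_toFinset.mpr (lPart_mem hn π)
  have hν1 : 1 ≤ nud π := Finset.card_pos.mpr ⟨_, hlV⟩
  have hνl := nud_le_lPart π
  have hcard : (π.parts.toFinset.erase (lPart π)).card = nud π - 1 :=
    Finset.card_erase_of_mem hlV
  have hexp : ((X : Polynomial ℤ) - 1)^(nud π - 1)
      = ∏ v ∈ π.parts.toFinset.erase (lPart π), ((fun _ => (-1:Polynomial ℤ)) v + (fun _ => X) v) := by
    rw [Finset.prod_const]
    · rw [hcard]
      congr 1
      ring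
  rw [hexp, Finset.prod_add, Finset.mul_sum]
  refine Finset.sum_congr rfl fun M hM => ?_
  rw [Finset.mem_powerset] at hM
  have hMcard : M.card ≤ nud π - 1 := hcard ▸ Finset.card_le_card hM
  rw [Finset.prod_const, Finset.prod_const, Finset.card_sdiff_of_subset hM, hcard]
  have : (X:Polynomial ℤ)^(lPart π - nud π) * ((-1)^M.card * X^(nud π - 1 - M.card))
      = (-1:Polynomial ℤ)^M.card * (X^(lPart π - nud π) * X^(nud π - 1 - M.card)) := by ring
  rw [this, ← pow_add]
  congr 2
  omega

lemma subset_powerset_filter {a : ℕ} (V : Finset ℕ) (hV : V ⊆ Finset.Icc 1 (a-1)) :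
    ((Finset.Icc 1 (a-1)).powerset).filter (fun S => S ⊆ V) = V.powerset := by
  ext S
  rw [Finset.mem_filter, Finset.mem_powerset, Finset.mem_powerset]
  exact ⟨fun h => h.2, fun h => ⟨h.trans hV, h⟩⟩

lemma cardEq (n a : ℕ) (hn : 0 < n) (ha : 1 ≤ a) (S : Finset ℕ) (hS : S ⊆ Finset.Icc 1 (a-1)) :
    ((Finset.univ : Finset (Nat.Partition n)).filter
        (fun π => lPart π = a ∧ S ⊆ π.parts.toFinset.erase a)).card
      = if a + ∑ s ∈ S, s ≤ n then pc (n - (a + ∑ s ∈ S, s)) a else 0 := by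
  classical
  have hSsmall : ∀ x ∈ S, 1 ≤ x ∧ x ≤ a - 1 := fun x hx => Finset.mem_Icc.mp (hS hx)
  have hanotin : a ∉ S.val := fun h => by have := hSsmall a h; omega
  have htnodup : (a ::ₘ S.val).Nodup := Multiset.nodup_cons.mpr ⟨hanotin, S.nodup⟩
  have hsumt : (a ::ₘ S.val).sum = a + ∑ s ∈ S, s := by
    rw [Multiset.sum_cons, sum_val_eq]
  have hle_parts : ∀ π : n.Partition, lPart π = a → S ⊆ π.parts.toFinset.erase a →
      (a ::ₘ S.val) ≤ π.parts := by
    intro π hl hsub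
    rw [Multiset.le_iff_count]
    intro x
    by_cases hx : x ∈ (a ::ₘ S.val)
    · have h1 : Multiset.count x (a ::ₘ S.val) ≤ 1 :=
        Multiset.nodup_iff_count_le_one.mp htnodup x
      have h2 : x ∈ π.parts := by
        rw [Multiset.mem_cons] at hx
        rcases hx with rfl | hx
        · exact hl ▸ lPart_mem hn π
        · have := hsub (Finset.mem_def.mpr hx)
          have := Finset.mem_of_mem_erase this
          rwa [Multiset.mem_toFinset] at this
      have := Multiset.count_pos.mpr h2
      omega
    · rw [Multiset.count_eq_zero_of_notMem hx]
      omega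
  split_ifs with hle
  · rw [pc, bounded]
    refine Finset.card_bij'
      (i := fun π hπ => ⟨π.parts - (a ::ₘ S.val), ?_, ?_⟩)
      (j := fun μ hμ => ⟨(a ::ₘ S.val) + μ.parts, ?_, ?_⟩) ?_ ?_ ?_ ?_
    · -- i pos
      intro p hp
      exact π.parts_pos (Multiset.mem_of_le (Multiset.sub_le_self _ _) hp)
    · -- i sum
      obtain ⟨hl, hsub⟩ := (Finset.mem_filter.mp hπ).2
      have ht := hle_parts π hl hsub
      have := tsub_add_cancel_of_le ht
      have hsum := congrArg Multiset.sum this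
      rw [Multiset.sum_add, hsumt, π.parts_sum] at hsum
      omega
    · -- j pos
      intro p hp
      rw [Multiset.mem_add] at hp
      rcases hp with hp | hp
      · rw [Multiset.mem_cons] at hp
        rcases hp with rfl | hp
        · omega
        · have := hSsmall p hp; omega
      · exact μ.parts_pos hp
    · -- j sum
      rw [Multiset.sum_add, hsumt, μ.parts_sum]
      omega
    · -- i mem
      intro π hπ
      obtain ⟨hl, hsub⟩ := (Finset.mem_filter.mp hπ).2
      rw [Finset.mem_filter]
      refine ⟨Finset.mem_univ _, ?_⟩
      intro p hp
      have hpmem : p ∈ π.parts := Multiset.mem_of_le (Multiset.sub_le_self _ _) hp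
      exact hl ▸ lPart_ub π hpmem
    · -- j mem
      intro μ hμ
      have hbd := (Finset.mem_filter.mp hμ).2
      rw [Finset.mem_filter]
      refine ⟨Finset.mem_univ _, ?_, ?_⟩
      · -- lPart = a
        show (a ::ₘ S.val + μ.parts).sup = a
        apply le_antisymm
        · refine Multiset.sup_le.mpr ?_
          intro x hx
          rw [Multiset.mem_add] at hx
          rcases hx with hx | hx
          · rw [Multiset.mem_cons] at hx
            rcases hx with rfl | hx
            · exact le_refl x
            · have := hSsmall x hx; omega
          · exact hbd x hx
        · exact Multiset.le_sup (s := a ::ₘ S.val + μ.parts) (by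
            rw [Multiset.mem_add]
            exact Or.inl (Multiset.mem_cons_self a S.val))
      · -- S ⊆ erase
        intro x hx
        have hx1 := hSsmall x hx
        rw [Finset.mem_erase, Multiset.mem_toFinset]
        refine ⟨by omega, ?_⟩
        rw [Multiset.mem_add]
        exact Or.inl (Multiset.mem_cons_of_mem (Finset.mem_def.mp hx))
    · -- left inverse
      intro π hπ
      obtain ⟨hl, hsub⟩ := (Finset.mem_filter.mp hπ).2
      apply Nat.Partition.ext
      simp only
      rw [add_comm]
      exact tsub_add_cancel_of_le (hle_parts π hl hsub)
    · -- right inverse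
      intro μ hμ
      apply Nat.Partition.ext
      simp only
      exact add_tsub_cancel_left _ _
  · rw [Finset.card_eq_zero, Finset.filter_eq_empty_iff]
    intro π _
    rintro ⟨hl, hsub⟩
    have ht := hle_parts π hl hsub
    have := tsub_add_cancel_of_le ht
    have hsum := congrArg Multiset.sum this
    rw [Multiset.sum_add, hsumt, π.parts_sum] at hsum
    omega

lemma Phi_expand (a : ℕ) : Phi a = ∑ S ∈ (Finset.Icc 1 a).powerset,
    C ((-1:Polynomial ℤ)^S.card * X^(a - S.card)) * X^(∑ b ∈ S, b) := by
  have h1 : ∀ b ∈ Finset.Icc 1 a, (C X - X^b : Polynomial (Polynomial ℤ))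
      = (fun b => -X^b) b + (fun _ => C X) b := by
    intro b _; simp; ring
  rw [Phi, Finset.prod_congr rfl h1, Finset.prod_add]
  refine Finset.sum_congr rfl fun S hS => ?_
  rw [Finset.mem_powerset] at hS
  have h2 : ∀ t ∈ S, (-X^t : Polynomial (Polynomial ℤ)) = (-1) * X^t := fun t _ => by ring
  rw [Finset.prod_congr rfl h2, Finset.prod_mul_distrib, Finset.prod_const,
    Finset.prod_pow_eq_pow_sum, Finset.prod_const, Finset.card_sdiff_of_subset hS, Nat.card_Icc,
    Nat.add_sub_cancel, map_mul, map_pow, map_pow, map_neg, map_one]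
  ring

lemma ERcoeff (n : ℕ) :
    (Rq n).coeff n = ∑ a ∈ Finset.range n, ∑ S ∈ (Finset.Icc 1 a).powerset,
      ((-1:Polynomial ℤ)^S.card * X^(a - S.card)) *
        (if a+1 + ∑ s ∈ S, s ≤ n then (pc (n - (a+1 + ∑ s ∈ S, s)) (a+1) : Polynomial ℤ)
         else 0) := by
  rw [Rq, Polynomial.finset_sum_coeff]
  refine Finset.sum_congr rfl fun a _ => ?_
  rw [Phi_expand, Finset.mul_sum, Polynomial.finset_sum_coeff]
  refine Finset.sum_congr rfl fun S _ => ?_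
  have key : (X^(a+1) * gb n (a+1) * (C ((-1:Polynomial ℤ)^S.card * X^(a - S.card))
      * X^(∑ b ∈ S, b)) : Polynomial (Polynomial ℤ))
      = (C ((-1:Polynomial ℤ)^S.card * X^(a - S.card)) * gb n (a+1))
          * X^(a + 1 + ∑ b ∈ S, b) := by
    rw [pow_add, pow_add]
    ring
  rw [key, Polynomial.coeff_mul_X_pow']
  split_ifs with h
  · rw [Polynomial.coeff_C_mul, gb_coeff n (a+1) _ (by omega)]
  · rw [mul_zero]

theorem ER (n : ℕ) (hn : 0 < n) :
    ∑ π : n.Partition, (X:Polynomial ℤ)^(lPart π - nud π) * (X - 1)^(nud π - 1)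
      = (Rq n).coeff n := by
  classical
  have hmap : ∀ π ∈ (Finset.univ : Finset n.Partition), lPart π ∈ Finset.Icc 1 n := by
    intro π _
    rw [Finset.mem_Icc]
    exact ⟨π.parts_pos (lPart_mem hn π), part_le_n π (lPart_mem hn π)⟩
  rw [← Finset.sum_fiberwise_of_maps_to hmap
    (fun π : n.Partition => (X:Polynomial ℤ)^(lPart π - nud π) * (X - 1)^(nud π - 1))]
  rw [ERcoeff]
  have hIR : ∑ a ∈ Finset.Icc 1 n, (∑ S ∈ (Finset.Icc 1 (a-1)).powerset,
      ((-1:Polynomial ℤ)^S.card * X^(a - 1 - S.card)) *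
        (if a + ∑ s ∈ S, s ≤ n then (pc (n - (a + ∑ s ∈ S, s)) a : Polynomial ℤ) else 0))
      = ∑ a ∈ Finset.range n, ∑ S ∈ (Finset.Icc 1 a).powerset,
      ((-1:Polynomial ℤ)^S.card * X^(a - S.card)) *
        (if a+1 + ∑ s ∈ S, s ≤ n then (pc (n - (a+1 + ∑ s ∈ S, s)) (a+1) : Polynomial ℤ)
         else 0) := by
    rw [sum_Icc_one n]
    refine Finset.sum_congr rfl fun a _ => ?_
    simp only [Nat.add_sub_cancel]
  rw [← hIR]
  · refine Finset.sum_congr rfl fun a ha => ?_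
    rw [Finset.mem_Icc] at ha
    -- rewrite each π-term via ER1 and lPart π = a
    have inner1 : ∀ π ∈ Finset.univ.filter (fun π : n.Partition => lPart π = a),
        (X:Polynomial ℤ)^(lPart π - nud π) * (X - 1)^(nud π - 1)
          = ∑ S ∈ (Finset.Icc 1 (a-1)).powerset,
              (if S ⊆ π.parts.toFinset.erase a
               then ((-1:Polynomial ℤ)^S.card * X^(a - 1 - S.card)) else 0) := by
      intro π hπ
      have hl : lPart π = a := (Finset.mem_filter.mp hπ).2
      have hVsub : π.parts.toFinset.erase a ⊆ Finset.Icc 1 (a-1) := by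
        intro x hx
        have hxne := Finset.ne_of_mem_erase hx
        have hxmem : x ∈ π.parts := by
          have := Finset.mem_of_mem_erase hx
          rwa [Multiset.mem_toFinset] at this
        rw [Finset.mem_Icc]
        have h1 := π.parts_pos hxmem
        have h2 := lPart_ub π hxmem
        omega
      rw [ER1 hn π, hl, ← subset_powerset_filter _ hVsub, Finset.sum_filter]
    rw [Finset.sum_congr rfl inner1, Finset.sum_comm]
    refine Finset.sum_congr rfl fun S hS => ?_
    rw [Finset.mem_powerset] at hS
    rw [← Finset.sum_filter, Finset.filter_filter, Finset.sum_const,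
      cardEq n a hn (by omega) S hS]
    rw [nsmul_eq_mul]
    split_ifs with h
    · rw [mul_comm]
    · simp


/-- Corollary 2.4 (partition version) as an identity in ℤ[c]:
∑_{π ∈ D(n)} (−1)^{#(π)−1} ∑_{j=0}^{s(π)−1} c^j
  = ∑_{π ∈ P(n)} c^{l(π)−ν_d(π)} (c−1)^{ν_d(π)−1}. -/
theorem stmt5 (n : ℕ) (hn : 0 < n) :
    ∑ π ∈ Nat.Partition.distincts n,
        (-1 : Polynomial ℤ) ^ (Multiset.card π.parts - 1) *
          ∑ j ∈ Finset.range (sPart π), X ^ j =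
      ∑ π : n.Partition, X ^ (lPart π - nud π) * (X - 1) ^ (nud π - 1) := by
  rw [EL n hn, Lq_eq_Rq n]
  exact (ER n hn).symm
end

section
/- For every positive integer n, the following identity holds in the polynomial ring ℤ[z]: ∑_{π ∈ D(n)} (−1)^{#(π)−1} ( ∑_{j=0}^{s(π)−1} z^{l(π)+1−s(π)+j} ) = ∑_{d | n} z^d, where the right-hand sum runs over the positive divisors d of n. (Equivalently, for z ∉ {0,1}: ∑_{π ∈ D(n)} (−1)^{#(π)−1} z^{l(π)+1} (1 − z^{−s(π)})/(z − 1) = ∑_{d|n} z^d.) -/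
open Finset Polynomial

/-- The set of "objects": nonempty finsets of naturals with sum `t` and width `< m`. -/
def obj (t m : ℕ) : Finset (Finset ℕ) :=
  (Finset.range (t+1)).powerset.filter fun Z =>
    Z.Nonempty ∧ Z.sum id = t ∧ ∀ x ∈ Z, ∀ y ∈ Z, x < y + m

lemma mem_obj {t m : ℕ} {Z : Finset ℕ} :
    Z ∈ obj t m ↔ Z.Nonempty ∧ Z.sum id = t ∧ ∀ x ∈ Z, ∀ y ∈ Z, x < y + m := by
  constructor
  · intro h
    exact (Finset.mem_filter.mp h).2
  · intro h
    refine Finset.mem_filter.mpr ⟨Finset.mem_powerset.mpr ?_, h⟩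
    intro x hx
    have : x ≤ Z.sum id := Finset.single_le_sum (fun i _ => Nat.zero_le i) hx
    rw [h.2.1] at this
    exact Finset.mem_range.mpr (Nat.lt_succ_of_le this)

/-- signed count of objects -/
noncomputable def NN (t m : ℕ) : Polynomial ℤ :=
  ∑ Z ∈ obj t m, (-1) ^ (Z.card - 1)

lemma toggle (t m : ℕ) (hm : 1 ≤ m) :
    ∑ Z ∈ (Finset.range m).powerset.filter (fun Z => Z.sum id = t),
      (-1 : Polynomial ℤ) ^ Z.card = 0 := by
  apply Finset.sum_involution (fun Z _ => if 0 ∈ Z then Z.erase 0 else insert 0 Z)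
  · intro Z hZ
    by_cases h0 : 0 ∈ Z
    · simp only [h0, if_true]
      have h1 : 1 ≤ Z.card := Finset.card_pos.mpr ⟨0, h0⟩
      have hc : Z.card = (Z.erase 0).card + 1 := by
        rw [Finset.card_erase_of_mem h0]; omega
      rw [hc, pow_succ]; ring
    · simp only [h0, if_false]
      rw [Finset.card_insert_of_notMem h0, pow_succ]; ring
  · intro Z hZ hne
    by_cases h0 : 0 ∈ Z
    · simp only [h0, if_true]
      intro h
      have h2 := Finset.notMem_erase 0 Z
      rw [h] at h2; exact h2 h0
    · simp only [h0, if_false]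
      intro h
      have h2 := Finset.mem_insert_self 0 Z
      rw [h] at h2; exact h0 h2
  · intro Z hZ
    by_cases h0 : 0 ∈ Z
    · simp [h0, Finset.notMem_erase, Finset.insert_erase h0]
    · simp [h0, Finset.mem_insert_self, Finset.erase_insert h0]
  · intro Z hZ
    have hZ' := Finset.mem_filter.mp hZ
    by_cases h0 : 0 ∈ Z
    · simp only [h0, if_true]
      refine Finset.mem_filter.mpr ⟨Finset.mem_powerset.mpr ?_, ?_⟩
      · exact (Finset.erase_subset _ _).trans (Finset.mem_powerset.mp hZ'.1)
      · rw [Finset.sum_erase Z (f := id) (a := 0) rfl]; exact hZ'.2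
    · simp only [h0, if_false]
      refine Finset.mem_filter.mpr ⟨Finset.mem_powerset.mpr ?_, ?_⟩
      · exact Finset.insert_subset (Finset.mem_range.mpr hm) (Finset.mem_powerset.mp hZ'.1)
      · rw [Finset.sum_insert h0]; simpa using hZ'.2

lemma sup_mem_self {Z : Finset ℕ} (h : Z.Nonempty) : Z.sup id ∈ Z := by
  obtain ⟨x, hx, he⟩ := Finset.exists_mem_eq_sup Z h id
  rw [he]; exact hx

lemma inf_mem_self {Z : Finset ℕ} (h : Z.Nonempty) : sInf {i | i ∈ Z} ∈ Z := by
  obtain ⟨x, hx⟩ := h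
  exact Nat.sInf_mem (⟨x, hx⟩ : Set.Nonempty {i | i ∈ Z})

lemma inf_le_self {Z : Finset ℕ} {x : ℕ} (hx : x ∈ Z) : sInf {i | i ∈ Z} ≤ x :=
  Nat.sInf_le hx

lemma filter_small_eq (t m : ℕ) :
    (obj t m).filter (fun Z => Z.sup id < m)
      = ((Finset.range m).powerset.filter (fun Z => Z.sum id = t)).filter
          (fun Z => Z.Nonempty) := by
  ext Z
  simp only [Finset.mem_filter, mem_obj, Finset.mem_powerset]
  constructor
  · rintro ⟨⟨hne, hsum, _⟩, hsup⟩
    refine ⟨⟨?_, hsum⟩, hne⟩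
    intro x hx
    exact Finset.mem_range.mpr (lt_of_le_of_lt (Finset.le_sup (f := id) hx) hsup)
  · rintro ⟨⟨hsub, hsum⟩, hne⟩
    have hbound : ∀ x ∈ Z, x < m := fun x hx => Finset.mem_range.mp (hsub hx)
    refine ⟨⟨hne, hsum, fun x hx y _ => lt_of_lt_of_le (hbound x hx) (Nat.le_add_left m y)⟩, ?_⟩
    obtain ⟨x, hx⟩ := hne
    have hm : 0 < m := lt_of_le_of_lt (Nat.zero_le x) (hbound x hx)
    exact Finset.sup_lt_iff (by simpa using hm) |>.mpr (fun b hb => by simpa using hbound b hb)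

lemma Rpart (t m : ℕ) (hm : 1 ≤ m) :
    ∑ Z ∈ (obj t m).filter (fun Z => Z.sup id < m), (-1 : Polynomial ℤ)^(Z.card - 1)
      = if t = 0 then 1 else 0 := by
  rw [filter_small_eq]
  set s := (Finset.range m).powerset.filter (fun Z => Z.sum id = t) with hs
  have h0 : ∑ Z ∈ s, (-1 : Polynomial ℤ)^Z.card = 0 := toggle t m hm
  rw [← Finset.sum_filter_add_sum_filter_not s (fun Z => Z.Nonempty)
    (fun Z => (-1 : Polynomial ℤ)^Z.card)] at h0
  have hcong : ∀ Z ∈ s.filter (fun Z : Finset ℕ => Z.Nonempty),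
      (-1 : Polynomial ℤ)^(Z.card - 1) = -(-1)^Z.card := by
    intro Z hZ
    have h1 : 1 ≤ Z.card := Finset.card_pos.mpr (Finset.mem_filter.mp hZ).2
    obtain ⟨c, hc⟩ : ∃ c, Z.card = c + 1 := ⟨Z.card - 1, by omega⟩
    rw [hc]
    simp [pow_succ]
  rw [Finset.sum_congr rfl hcong, Finset.sum_neg_distrib]
  have h2 : ∑ Z ∈ s.filter (fun Z : Finset ℕ => Z.Nonempty), (-1 : Polynomial ℤ)^Z.card
      = - ∑ Z ∈ s.filter (fun Z : Finset ℕ => ¬Z.Nonempty), (-1 : Polynomial ℤ)^Z.card := by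
    linear_combination h0
  rw [h2, neg_neg]
  have h3 : s.filter (fun Z : Finset ℕ => ¬Z.Nonempty) = if t = 0 then {∅} else ∅ := by
    ext Z
    simp only [Finset.mem_filter, Finset.not_nonempty_iff_eq_empty, hs, Finset.mem_powerset]
    constructor
    · rintro ⟨⟨_, hsum⟩, rfl⟩
      simp at hsum
      simp [hsum]
    · intro h
      by_cases ht : t = 0
      · simp [ht] at h
        subst h
        simp [ht]
      · simp [ht] at h
  rw [h3]
  by_cases ht : t = 0 <;> simp [ht]

lemma iZ_spec {t m : ℕ} (hm : 1 ≤ m) {Z : Finset ℕ} (hne : Z.Nonempty)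
    (hsum : Z.sum id = t) (hw : ∀ x ∈ Z, ∀ y ∈ Z, x < y + m) (hsup : m ≤ Z.sup id) :
    (insert (Z.sup id - m) (Z.erase (Z.sup id))) ∈ obj (t - m) m ∧
    (insert (Z.sup id - m) (Z.erase (Z.sup id))).card = Z.card ∧
    sInf {i | i ∈ insert (Z.sup id - m) (Z.erase (Z.sup id))} = Z.sup id - m := by
  set M := Z.sup id with hM
  have hMmem : M ∈ Z := sup_mem_self hne
  have hMle : ∀ x ∈ Z, x ≤ M := fun x hx => Finset.le_sup (f := id) hx
  have hMt : M ≤ t := hsum ▸ Finset.single_le_sum (fun i _ => Nat.zero_le i) hMmem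
  have hlow : ∀ y ∈ Z, M - m < y := by
    intro y hy
    have := hw M hMmem y hy
    omega
  have hnotmem : M - m ∉ Z.erase M := by
    intro h
    have := hlow _ (Finset.mem_of_mem_erase h)
    omega
  have herase_lt : ∀ y ∈ Z.erase M, y < M := by
    intro y hy
    have h1 := hMle y (Finset.mem_of_mem_erase hy)
    have h2 := Finset.ne_of_mem_erase hy
    omega
  have hcard : (insert (M - m) (Z.erase M)).card = Z.card := by
    rw [Finset.card_insert_of_notMem hnotmem, Finset.card_erase_of_mem hMmem]
    have : 1 ≤ Z.card := Finset.card_pos.mpr hne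
    omega
  have hsum' : (insert (M - m) (Z.erase M)).sum id = t - m := by
    rw [Finset.sum_insert hnotmem]
    have h1 : (M : ℕ) + (Z.erase M).sum id = t := by
      rw [← hsum]; exact Finset.add_sum_erase Z id hMmem
    simp only [id_eq, Function.id_def] at h1 ⊢
    omega
  refine ⟨mem_obj.mpr ⟨Finset.insert_nonempty _ _, hsum', ?_⟩, hcard, ?_⟩
  · intro x hx y hy
    rcases Finset.mem_insert.mp hx with rfl | hx' <;>
      rcases Finset.mem_insert.mp hy with rfl | hy'
    · omega
    · have := hlow y (Finset.mem_of_mem_erase hy'); omega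
    · have := herase_lt x hx'; omega
    · exact hw x (Finset.mem_of_mem_erase hx') y (Finset.mem_of_mem_erase hy')
  · apply le_antisymm
    · exact Nat.sInf_le (Finset.mem_insert_self _ _)
    · apply le_csInf ⟨M - m, Finset.mem_insert_self _ _⟩
      intro y hy
      have hy' : y ∈ insert (M - m) (Z.erase M) := hy
      rcases Finset.mem_insert.mp hy' with rfl | hy''
      · exact le_refl _
      · exact le_of_lt (hlow y (Finset.mem_of_mem_erase hy''))

lemma jZ_spec {t m : ℕ} (hm : 1 ≤ m) (hmt : m ≤ t) {Z : Finset ℕ} (hZ : Z ∈ obj (t - m) m) :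
    (insert (sInf {i | i ∈ Z} + m) (Z.erase (sInf {i | i ∈ Z}))) ∈ obj t m ∧
    m ≤ (insert (sInf {i | i ∈ Z} + m) (Z.erase (sInf {i | i ∈ Z}))).sup id ∧
    (insert (sInf {i | i ∈ Z} + m) (Z.erase (sInf {i | i ∈ Z}))).sup id
      = sInf {i | i ∈ Z} + m := by
  obtain ⟨hne, hsum, hw⟩ := mem_obj.mp hZ
  set b := sInf {i | i ∈ Z} with hb
  have hbmem : b ∈ Z := inf_mem_self hne
  have hble : ∀ x ∈ Z, b ≤ x := fun x hx => inf_le_self hx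
  have hbt : b ≤ t - m := hsum ▸ Finset.single_le_sum (fun i _ => Nat.zero_le i) hbmem
  have hup : ∀ x ∈ Z, x < b + m := fun x hx => hw x hx b hbmem
  have hnotmem : b + m ∉ Z.erase b := by
    intro h
    have := hup _ (Finset.mem_of_mem_erase h)
    omega
  have herase_gt : ∀ y ∈ Z.erase b, b < y := by
    intro y hy
    have h1 := hble y (Finset.mem_of_mem_erase hy)
    have h2 := Finset.ne_of_mem_erase hy
    omega
  have hsum' : (insert (b + m) (Z.erase b)).sum id = t := by
    rw [Finset.sum_insert hnotmem]
    have h1 : (b : ℕ) + (Z.erase b).sum id = t - m := by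
      rw [← hsum]; exact Finset.add_sum_erase Z id hbmem
    simp only [id_eq, Function.id_def] at h1 ⊢
    omega
  have hsup : (insert (b + m) (Z.erase b)).sup id = b + m := by
    apply le_antisymm
    · apply Finset.sup_le
      intro x hx
      rcases Finset.mem_insert.mp hx with rfl | hx'
      · exact le_refl _
      · exact le_of_lt (hup x (Finset.mem_of_mem_erase hx'))
    · exact Finset.le_sup (f := id) (Finset.mem_insert_self _ _)
  refine ⟨mem_obj.mpr ⟨Finset.insert_nonempty _ _, hsum', ?_⟩, ?_, hsup⟩
  · intro x hx y hy
    rcases Finset.mem_insert.mp hx with rfl | hx' <;>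
      rcases Finset.mem_insert.mp hy with rfl | hy'
    · omega
    · have := herase_gt y hy'; omega
    · have := hup x (Finset.mem_of_mem_erase hx'); omega
    · exact hw x (Finset.mem_of_mem_erase hx') y (Finset.mem_of_mem_erase hy')
  · rw [hsup]; omega

lemma shift (t m : ℕ) (hm : 1 ≤ m) (hmt : m ≤ t) :
    ∑ Z ∈ (obj t m).filter (fun Z => m ≤ Z.sup id), (-1 : Polynomial ℤ)^(Z.card - 1)
      = NN (t - m) m := by
  rw [NN]
  refine Finset.sum_bij' (fun Z _ => insert (Z.sup id - m) (Z.erase (Z.sup id)))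
    (fun Z _ => insert (sInf {i | i ∈ Z} + m) (Z.erase (sInf {i | i ∈ Z})))
    ?hi ?hj ?left ?right ?vals
  case hi =>
    intro Z hZ
    obtain ⟨hobj, hsup⟩ := Finset.mem_filter.mp hZ
    obtain ⟨hne, hsum, hw⟩ := mem_obj.mp hobj
    exact (iZ_spec hm hne hsum hw hsup).1
  case hj =>
    intro Z hZ
    exact Finset.mem_filter.mpr ⟨(jZ_spec hm hmt hZ).1, (jZ_spec hm hmt hZ).2.1⟩
  case left =>
    intro Z hZ
    obtain ⟨hobj, hsup⟩ := Finset.mem_filter.mp hZ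
    obtain ⟨hne, hsum, hw⟩ := mem_obj.mp hobj
    obtain ⟨_, _, hinf⟩ := iZ_spec hm hne hsum hw hsup
    simp only [hinf]
    have hMmem : Z.sup id ∈ Z := sup_mem_self hne
    have h1 : Z.sup id - m + m = Z.sup id := by omega
    have hnm : Z.sup id - m ∉ Z.erase (Z.sup id) := by
      intro h
      have h2 := hw (Z.sup id) hMmem _ (Finset.mem_of_mem_erase h)
      omega
    rw [h1, Finset.erase_insert hnm, Finset.insert_erase hMmem]
  case right =>
    intro Z hZ
    obtain ⟨_, _, hsup⟩ := jZ_spec hm hmt hZ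
    simp only [hsup]
    obtain ⟨hne, hsum, hw⟩ := mem_obj.mp hZ
    have hbmem : sInf {i | i ∈ Z} ∈ Z := inf_mem_self hne
    have hnm : sInf {i | i ∈ Z} + m ∉ Z.erase (sInf {i | i ∈ Z}) := by
      intro h
      have := hw _ (Finset.mem_of_mem_erase h) _ hbmem
      omega
    rw [Nat.add_sub_cancel, Finset.erase_insert hnm, Finset.insert_erase hbmem]
  case vals =>
    intro Z hZ
    obtain ⟨hobj, hsup⟩ := Finset.mem_filter.mp hZ
    obtain ⟨hne, hsum, hw⟩ := mem_obj.mp hobj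
    rw [(iZ_spec hm hne hsum hw hsup).2.1]

lemma NN_eq (m : ℕ) (hm : 1 ≤ m) : ∀ t, NN t m = if m ∣ t then 1 else 0 := by
  intro t
  induction t using Nat.strong_induction_on with
  | _ t ih =>
    have hsplit : NN t m
        = (∑ Z ∈ (obj t m).filter (fun Z => m ≤ Z.sup id), (-1 : Polynomial ℤ)^(Z.card-1))
          + ∑ Z ∈ (obj t m).filter (fun Z => ¬ m ≤ Z.sup id),
              (-1 : Polynomial ℤ)^(Z.card-1) := by
      rw [NN, Finset.sum_filter_add_sum_filter_not]
    have hnotle : (obj t m).filter (fun Z => ¬ m ≤ Z.sup id)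
        = (obj t m).filter (fun Z => Z.sup id < m) := by
      apply Finset.filter_congr
      intro Z _
      simp [Nat.not_le]
    by_cases hmt : m ≤ t
    · have hIH := ih (t - m) (by omega)
      rw [hsplit, hnotle, Rpart t m hm, shift t m hm hmt, hIH]
      have ht0 : t ≠ 0 := by omega
      have hdvd : (m ∣ t - m) ↔ (m ∣ t) := by
        constructor
        · intro h
          have h2 : m ∣ (t - m) + m := Dvd.dvd.add h dvd_rfl
          rwa [Nat.sub_add_cancel hmt] at h2
        · intro h
          exact Nat.dvd_sub h dvd_rfl
      simp [ht0, hdvd]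
    · have hemp : (obj t m).filter (fun Z => m ≤ Z.sup id) = ∅ := by
        rw [Finset.filter_eq_empty_iff]
        intro Z hZ
        obtain ⟨hne, hsum, hw⟩ := mem_obj.mp hZ
        have hst : Z.sup id ≤ t := by
          have hmem := sup_mem_self hne
          exact hsum ▸ Finset.single_le_sum (fun i _ => Nat.zero_le i) hmem
        omega
      rw [hsplit, hnotle, Rpart t m hm, hemp, Finset.sum_empty, zero_add]
      by_cases ht : t = 0
      · simp [ht]
      · have hnd : ¬ m ∣ t := by
          intro h
          have := Nat.le_of_dvd (by omega) h
          omega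
        simp [ht, hnd]

lemma sup_id_val (Z : Finset ℕ) : Z.sup id = Z.val.sup := by
  rw [Finset.sup_def, Multiset.map_id]

lemma sum_id_val (Z : Finset ℕ) : Z.sum id = Z.val.sum := by
  rw [show Z.sum id = (Z.val.map id).sum from rfl, Multiset.map_id]

lemma mem_distincts' {n : ℕ} {π : n.Partition} :
    π ∈ Nat.Partition.distincts n ↔ π.parts.Nodup := by
  simp [Nat.Partition.distincts]

lemma partition_sum (n m : ℕ) (hn : 0 < n) (hm : 1 ≤ m) :
    ∑ π ∈ (Nat.Partition.distincts n).filter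
        (fun π => lPart π - sPart π < m ∧ m ≤ lPart π),
      (-1 : Polynomial ℤ)^(Multiset.card π.parts - 1)
    = ∑ Z ∈ (obj n m).filter (fun Z => m ≤ Z.sup id),
        (-1 : Polynomial ℤ)^(Z.card - 1) := by
  refine Finset.sum_bij' (fun π _ => π.parts.toFinset)
    (fun Z hZ => ⟨Z.val, ?_, ?_⟩) ?hi ?hj ?left ?right ?vals
  · -- parts_pos
    intro i hi
    rcases Nat.eq_zero_or_pos i with h | h
    swap
    · exact h
    · exfalso
      obtain ⟨hobj, hsup⟩ := Finset.mem_filter.mp hZ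
      obtain ⟨hne, hsum, hw⟩ := mem_obj.mp hobj
      have h0 : (0 : ℕ) ∈ Z := h ▸ hi
      have := hw (Z.sup id) (sup_mem_self hne) 0 h0
      omega
  · -- parts_sum
    obtain ⟨hobj, _⟩ := Finset.mem_filter.mp hZ
    obtain ⟨_, hsum, _⟩ := mem_obj.mp hobj
    rw [← sum_id_val, hsum]
  case hi =>
    intro π hπ
    obtain ⟨hd, hcond⟩ := Finset.mem_filter.mp hπ
    have hnodup : π.parts.Nodup := mem_distincts'.mp hd
    have hval : π.parts.toFinset.val = π.parts := by
      rw [Multiset.toFinset_val, Multiset.dedup_eq_self.mpr hnodup]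
    have hsup : π.parts.toFinset.sup id = lPart π := by
      rw [sup_id_val, hval]; rfl
    have hinf : sInf {i | i ∈ π.parts.toFinset} = sPart π := by
      show sInf {i | i ∈ π.parts.toFinset} = sInf {i | i ∈ π.parts}
      have hset : {i | i ∈ π.parts.toFinset} = {i | i ∈ π.parts} := by
        ext i
        simp [Multiset.mem_toFinset]
      rw [hset]
    have hne : π.parts.toFinset.Nonempty := by
      have : π.parts ≠ 0 := by
        intro h
        have := π.parts_sum
        rw [h] at this
        simp at this
        omega
      obtain ⟨x, hx⟩ := Multiset.exists_mem_of_ne_zero this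
      exact ⟨x, Multiset.mem_toFinset.mpr hx⟩
    refine Finset.mem_filter.mpr ⟨mem_obj.mpr ⟨hne, ?_, ?_⟩, ?_⟩
    · show π.parts.toFinset.sum id = n
      rw [sum_id_val, hval]
      exact π.parts_sum
    · intro x hx y hy
      have hxl : x ≤ lPart π := by
        rw [← hsup]; exact Finset.le_sup (f := id) hx
      have hys : sPart π ≤ y := by
        rw [← hinf]; exact Nat.sInf_le hy
      have := hcond.1
      omega
    · exact le_of_le_of_eq hcond.2 hsup.symm
  case hj =>
    intro Z hZ
    obtain ⟨hobj, hsup⟩ := Finset.mem_filter.mp hZ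
    obtain ⟨hne, hsum, hw⟩ := mem_obj.mp hobj
    refine Finset.mem_filter.mpr ⟨mem_distincts'.mpr Z.nodup, ?_, ?_⟩
    · show Multiset.sup Z.val - sInf {i | i ∈ Z.val} < m
      have h1 : Multiset.sup Z.val = Z.sup id := (sup_id_val Z).symm
      have h2 : sInf {i | i ∈ Z.val} = sInf {i | i ∈ Z} := rfl
      rw [h1, h2]
      have hl := sup_mem_self hne
      have hs := inf_mem_self hne
      have := hw (Z.sup id) hl (sInf {i | i ∈ Z}) hs
      omega
    · show m ≤ Multiset.sup Z.val
      rw [show Multiset.sup Z.val = Z.sup id from (sup_id_val Z).symm]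
      exact hsup
  case left =>
    intro π hπ
    obtain ⟨hd, _⟩ := Finset.mem_filter.mp hπ
    have hnodup : π.parts.Nodup := mem_distincts'.mp hd
    have hval : π.parts.toFinset.val = π.parts := by
      rw [Multiset.toFinset_val, Multiset.dedup_eq_self.mpr hnodup]
    exact Nat.Partition.ext hval
  case right =>
    intro Z hZ
    exact Finset.val_toFinset Z
  case vals =>
    intro π hπ
    obtain ⟨hd, _⟩ := Finset.mem_filter.mp hπ
    have hnodup : π.parts.Nodup := mem_distincts'.mp hd
    have hval : π.parts.toFinset.val = π.parts := by
      rw [Multiset.toFinset_val, Multiset.dedup_eq_self.mpr hnodup]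
    have : π.parts.toFinset.card = Multiset.card π.parts := by
      rw [Finset.card_def, hval]
    rw [this]

/-- Corollary 2.6 (partition version) as an identity in ℤ[z]:
∑_{π ∈ D(n)} (−1)^{#(π)−1} ∑_{j=0}^{s(π)−1} z^{l(π)+1−s(π)+j} = ∑_{d ∣ n} z^d. -/
theorem stmt7 (n : ℕ) (hn : 0 < n) :
    ∑ π ∈ Nat.Partition.distincts n,
        (-1 : Polynomial ℤ) ^ (Multiset.card π.parts - 1) *
          ∑ j ∈ Finset.range (sPart π), X ^ (lPart π + 1 - sPart π + j) =
      ∑ d ∈ n.divisors, X ^ d := by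
  have hfacts : ∀ π ∈ Nat.Partition.distincts n,
      1 ≤ sPart π ∧ sPart π ≤ lPart π ∧ lPart π ≤ n := by
    intro π _
    have hne : π.parts ≠ 0 := by
      intro h
      have h2 := π.parts_sum
      rw [h] at h2
      simp at h2
      omega
    obtain ⟨x, hx⟩ := Multiset.exists_mem_of_ne_zero hne
    have hsmem : sPart π ∈ π.parts := Nat.sInf_mem (⟨x, hx⟩ : Set.Nonempty {i | i ∈ π.parts})
    refine ⟨π.parts_pos hsmem, Multiset.le_sup hsmem, ?_⟩
    have : ∀ a ∈ π.parts, a ≤ n := by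
      intro a ha
      calc a ≤ π.parts.sum := Multiset.single_le_sum (fun b _ => Nat.zero_le b) a ha
        _ = n := π.parts_sum
    exact Multiset.sup_le.mpr this
  calc
    ∑ π ∈ Nat.Partition.distincts n,
        (-1 : Polynomial ℤ) ^ (Multiset.card π.parts - 1) *
          ∑ j ∈ Finset.range (sPart π), X ^ (lPart π + 1 - sPart π + j)
      = ∑ π ∈ Nat.Partition.distincts n, ∑ i ∈ Finset.Ico 1 (n+1),
          (if lPart π - sPart π < i ∧ i ≤ lPart π then
            (-1 : Polynomial ℤ) ^ (Multiset.card π.parts - 1) * X ^ i else 0) := by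
        apply Finset.sum_congr rfl
        intro π hπ
        obtain ⟨h1, h2, h3⟩ := hfacts π hπ
        have hIco : (Finset.Ico 1 (n+1)).filter
              (fun i => lPart π - sPart π < i ∧ i ≤ lPart π)
            = Finset.Ico (lPart π + 1 - sPart π) (lPart π + 1) := by
          ext i
          simp only [Finset.mem_filter, Finset.mem_Ico]
          omega
        have key : ∑ i ∈ Finset.Ico 1 (n+1),
            (if lPart π - sPart π < i ∧ i ≤ lPart π then
              (-1 : Polynomial ℤ) ^ (Multiset.card π.parts - 1) * X ^ i else 0)
            = (-1 : Polynomial ℤ) ^ (Multiset.card π.parts - 1) *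
              ∑ j ∈ Finset.range (sPart π), X ^ (lPart π + 1 - sPart π + j) := by
          rw [← Finset.sum_filter, hIco, Finset.sum_Ico_eq_sum_range]
          have hs : lPart π + 1 - (lPart π + 1 - sPart π) = sPart π := by omega
          rw [hs, Finset.mul_sum]
        exact key.symm
    _ = ∑ i ∈ Finset.Ico 1 (n+1), ∑ π ∈ Nat.Partition.distincts n,
          (if lPart π - sPart π < i ∧ i ≤ lPart π then
            (-1 : Polynomial ℤ) ^ (Multiset.card π.parts - 1) * X ^ i else 0) :=
        Finset.sum_comm
    _ = ∑ i ∈ Finset.Ico 1 (n+1), (if i ∣ n then (1 : Polynomial ℤ) else 0) * X ^ i := by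
        apply Finset.sum_congr rfl
        intro i hi
        obtain ⟨h1i, hin'⟩ := Finset.mem_Ico.mp hi
        have hin : i ≤ n := by omega
        rw [← Finset.sum_filter, ← Finset.sum_mul, partition_sum n i hn h1i,
          shift n i h1i hin, NN_eq i h1i (n - i)]
        have hdvd : (i ∣ n - i) ↔ (i ∣ n) := by
          constructor
          · intro h
            have h2 : i ∣ (n - i) + i := Dvd.dvd.add h dvd_rfl
            rwa [Nat.sub_add_cancel hin] at h2
          · intro h
            exact Nat.dvd_sub h dvd_rfl
        simp [hdvd]
    _ = ∑ d ∈ n.divisors, X ^ d := by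
        have hdiv : n.divisors = (Finset.Ico 1 (n+1)).filter (fun i => i ∣ n) := rfl
        rw [hdiv, Finset.sum_filter]
        apply Finset.sum_congr rfl
        intro i _
        by_cases h : i ∣ n <;> simp [h]
end

section
/- Let q be a complex number with |q| < 1. Then ∑_{n=1}^{∞} q^n/(1 − q^n) + ∑_{n=1}^{∞} q^{n(n+1)} / ((1 − q^n) (q;q)_n^2) = ∑_{n=1}^{∞} q^n / ((1 − q^n) (q;q)_n). -/
open Finset

namespace Stmt11Aux

/-- `P q n = ∏_{k=1}^n (1 - q^k)` -/
noncomputable def P (q : ℂ) (n : ℕ) : ℂ := ∏ k ∈ Finset.range n, (1 - q ^ (k + 1))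

lemma qPoch_eq (q : ℂ) (n : ℕ) : qPoch q q n = P q n := by
  unfold qPoch P
  refine Finset.prod_congr rfl fun k _ => ?_
  rw [pow_succ']

lemma P_zero (q : ℂ) : P q 0 = 1 := by simp [P]

lemma P_succ (q : ℂ) (n : ℕ) : P q (n + 1) = P q n * (1 - q ^ (n + 1)) := by
  unfold P; rw [Finset.prod_range_succ]

section basic
variable {q : ℂ} (hq : ‖q‖ < 1)

include hq

lemma norm_pow_lt (k : ℕ) : ‖q ^ (k + 1)‖ < 1 := by
  rw [norm_pow]
  calc ‖q‖ ^ (k + 1) ≤ ‖q‖ ^ 1 := by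
        apply pow_le_pow_of_le_one (norm_nonneg q) hq.le; omega
    _ = ‖q‖ := pow_one _
    _ < 1 := hq

lemma one_sub_pow_ne (k : ℕ) : 1 - q ^ (k + 1) ≠ 0 := by
  intro h
  have h1 : q ^ (k + 1) = 1 := by linear_combination -h
  have h2 := norm_pow_lt hq k
  rw [h1] at h2
  simp at h2

lemma P_ne (n : ℕ) : P q n ≠ 0 := by
  unfold P
  exact Finset.prod_ne_zero_iff.2 fun k _ => one_sub_pow_ne hq k

lemma norm_one_sub_pow_ge (k : ℕ) : 1 - ‖q‖ ≤ ‖1 - q ^ (k + 1)‖ := by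
  have h1 : ‖q ^ (k + 1)‖ ≤ ‖q‖ := by
    rw [norm_pow]
    calc ‖q‖ ^ (k + 1) ≤ ‖q‖ ^ 1 := by
          apply pow_le_pow_of_le_one (norm_nonneg q) hq.le; omega
      _ = ‖q‖ := pow_one _
  calc 1 - ‖q‖ ≤ 1 - ‖q ^ (k+1)‖ := by linarith
    _ ≤ ‖1 - q ^ (k + 1)‖ := by
        have := norm_sub_norm_le (1 : ℂ) (q ^ (k+1))
        simpa using this

lemma norm_P_le (n : ℕ) : ‖P q n‖ ≤ Real.exp (‖q‖ / (1 - ‖q‖)) := by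
  have hr0 : (0:ℝ) ≤ ‖q‖ := norm_nonneg q
  have hgeo : Summable fun k : ℕ => ‖q‖ ^ (k + 1) := by
    apply (summable_nat_add_iff 1).2
    exact summable_geometric_of_lt_one hr0 hq
  have hsum : ∑ k ∈ range n, ‖q‖ ^ (k + 1) ≤ ‖q‖ / (1 - ‖q‖) := by
    have h1 : ∑ k ∈ range n, ‖q‖ ^ (k + 1) ≤ ∑' k : ℕ, ‖q‖ ^ (k + 1) := by
      apply Summable.sum_le_tsum _ (fun i _ => by positivity) hgeo
    have h2 : ∑' k : ℕ, ‖q‖ ^ (k + 1) = ‖q‖ / (1 - ‖q‖) := by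
      have : ∑' k : ℕ, ‖q‖ ^ (k + 1) = ∑' k : ℕ, ‖q‖ * ‖q‖ ^ k := by
        congr 1; ext k; ring
      rw [this, tsum_mul_left, tsum_geometric_of_lt_one hr0 hq, div_eq_mul_inv]
    linarith
  calc ‖P q n‖ ≤ ∏ k ∈ range n, ‖1 - q ^ (k + 1)‖ := Finset.norm_prod_le _ _
    _ ≤ ∏ k ∈ range n, Real.exp (‖q‖ ^ (k + 1)) := by
        apply Finset.prod_le_prod (fun k _ => norm_nonneg _)
        intro k _
        calc ‖1 - q ^ (k+1)‖ ≤ ‖(1:ℂ)‖ + ‖q ^ (k+1)‖ := norm_sub_le _ _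
          _ = ‖q‖ ^ (k+1) + 1 := by rw [norm_pow]; simp; ring
          _ ≤ Real.exp (‖q‖ ^ (k + 1)) := Real.add_one_le_exp _
    _ = Real.exp (∑ k ∈ range n, ‖q‖ ^ (k + 1)) := (Real.exp_sum _ _).symm
    _ ≤ Real.exp (‖q‖ / (1 - ‖q‖)) := Real.exp_le_exp.2 hsum

/-- Weierstrass product inequality for the tail factors. -/
lemma weier (a : ℕ) : ∀ m : ℕ,
    1 - ∑ k ∈ range m, ‖q‖ ^ (a + k + 1) ≤ ∏ k ∈ range m, (1 - ‖q‖ ^ (a + k + 1)) := by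
  intro m
  induction m with
  | zero => simp
  | succ m ih =>
    rw [Finset.sum_range_succ, Finset.prod_range_succ]
    have hx : 0 ≤ ‖q‖ ^ (a + m + 1) := by positivity
    have hx1 : ‖q‖ ^ (a + m + 1) ≤ ‖q‖ := by
      calc ‖q‖ ^ (a + m + 1) ≤ ‖q‖ ^ 1 := by
            apply pow_le_pow_of_le_one (norm_nonneg q) hq.le; omega
        _ = ‖q‖ := pow_one _
    have hprodnn : (0:ℝ) ≤ ∏ k ∈ range m, (1 - ‖q‖ ^ (a + k + 1)) := by
      apply Finset.prod_nonneg
      intro k _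
      have : ‖q‖ ^ (a + k + 1) ≤ ‖q‖ := by
        calc ‖q‖ ^ (a + k + 1) ≤ ‖q‖ ^ 1 := by
              apply pow_le_pow_of_le_one (norm_nonneg q) hq.le; omega
          _ = ‖q‖ := pow_one _
      linarith
    have hS : 0 ≤ ∑ k ∈ range m, ‖q‖ ^ (a + k + 1) :=
      Finset.sum_nonneg fun k _ => by positivity
    nlinarith [ih]

lemma exists_cl : ∃ c : ℝ, 0 < c ∧ ∀ n, c ≤ ‖P q n‖ := by
  have hr0 : (0:ℝ) ≤ ‖q‖ := norm_nonneg q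
  have hr1 : (0:ℝ) < 1 - ‖q‖ := by linarith
  obtain ⟨K, hK⟩ := exists_pow_lt_of_lt_one (show (0:ℝ) < (1 - ‖q‖)/2 by linarith) hq
  refine ⟨(1 - ‖q‖) ^ K * (1/2), by positivity, fun n => ?_⟩
  have hfac : ∀ k : ℕ, 1 - ‖q‖ ≤ 1 - ‖q‖ ^ (k + 1) := by
    intro k
    have : ‖q‖ ^ (k + 1) ≤ ‖q‖ := by
      calc ‖q‖ ^ (k + 1) ≤ ‖q‖ ^ 1 := by
            apply pow_le_pow_of_le_one hr0 hq.le; omega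
        _ = ‖q‖ := pow_one _
    linarith
  have hPbound : ∏ k ∈ range n, (1 - ‖q‖ ^ (k + 1)) ≤ ‖P q n‖ := by
    unfold P
    calc ∏ k ∈ range n, (1 - ‖q‖ ^ (k + 1)) ≤ ∏ k ∈ range n, ‖1 - q ^ (k + 1)‖ := by
          apply Finset.prod_le_prod
          · intro k _; linarith [hfac k]
          · intro k _
            calc 1 - ‖q‖ ^ (k+1) = 1 - ‖q ^ (k+1)‖ := by rw [norm_pow]
              _ ≤ ‖1 - q ^ (k + 1)‖ := by
                  have := norm_sub_norm_le (1 : ℂ) (q ^ (k+1)); simpa using this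
      _ = ‖P q n‖ := by rw [P, norm_prod]
  refine le_trans ?_ hPbound
  -- now bound the real product from below
  rcases le_or_gt n K with hn | hn
  · calc (1 - ‖q‖) ^ K * (1/2) ≤ (1 - ‖q‖) ^ K := by nlinarith [pow_nonneg hr1.le K]
      _ ≤ (1 - ‖q‖) ^ n := by
          apply pow_le_pow_of_le_one hr1.le (by linarith) hn
      _ ≤ ∏ k ∈ range n, (1 - ‖q‖ ^ (k + 1)) := by
          rw [show (1 - ‖q‖) ^ n = ∏ _k ∈ range n, (1 - ‖q‖) from by
            rw [Finset.prod_const, Finset.card_range]]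
          apply Finset.prod_le_prod (fun _ _ => hr1.le) (fun k _ => hfac k)
  · obtain ⟨m, rfl⟩ : ∃ m, n = K + m := ⟨n - K, by omega⟩
    rw [Finset.prod_range_add]
    have h1 : (1 - ‖q‖) ^ K ≤ ∏ k ∈ range K, (1 - ‖q‖ ^ (k + 1)) := by
      rw [show (1 - ‖q‖) ^ K = ∏ _k ∈ range K, (1 - ‖q‖) from by
        rw [Finset.prod_const, Finset.card_range]]
      apply Finset.prod_le_prod (fun _ _ => hr1.le) (fun k _ => hfac k)
    have h2 : (1/2 : ℝ) ≤ ∏ k ∈ range m, (1 - ‖q‖ ^ (K + k + 1)) := by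
      refine le_trans ?_ (weier hq K m)
      have hsum : ∑ k ∈ range m, ‖q‖ ^ (K + k + 1) ≤ ‖q‖ ^ (K + 1) / (1 - ‖q‖) := by
        have h3 : ∑ k ∈ range m, ‖q‖ ^ (K + k + 1) = ‖q‖ ^ (K + 1) * ∑ k ∈ range m, ‖q‖ ^ k := by
          rw [Finset.mul_sum]
          congr 1; ext k; rw [← pow_add]; congr 1; omega
        have h4 : ∑ k ∈ range m, ‖q‖ ^ k ≤ (1 - ‖q‖)⁻¹ := by
          have := Summable.sum_le_tsum (f := fun k : ℕ => ‖q‖ ^ k) (range m)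
            (fun i _ => by positivity) (summable_geometric_of_lt_one hr0 hq)
          rwa [tsum_geometric_of_lt_one hr0 hq] at this
        rw [h3, div_eq_mul_inv]
        apply mul_le_mul_of_nonneg_left h4 (by positivity)
      have h5 : ‖q‖ ^ (K + 1) / (1 - ‖q‖) ≤ 1/2 := by
        rw [div_le_iff₀ hr1]
        calc ‖q‖ ^ (K + 1) ≤ ‖q‖ ^ K := by
              apply pow_le_pow_of_le_one hr0 hq.le; omega
          _ ≤ (1 - ‖q‖)/2 := hK.le
          _ = 1/2 * (1 - ‖q‖) := by ring
      linarith
    have hnn : (0:ℝ) ≤ ∏ k ∈ range K, (1 - ‖q‖ ^ (k + 1)) := by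
      apply Finset.prod_nonneg; intro k _; linarith [hfac k]
    calc (1 - ‖q‖) ^ K * (1/2) ≤ (∏ k ∈ range K, (1 - ‖q‖ ^ (k+1))) * (1/2) := by
          apply mul_le_mul_of_nonneg_right h1; norm_num
      _ ≤ (∏ k ∈ range K, (1 - ‖q‖ ^ (k+1))) * ∏ k ∈ range m, (1 - ‖q‖ ^ (K + k + 1)) := by
          apply mul_le_mul_of_nonneg_left h2 hnn

/-- Per-term split used in the Durfee induction. -/
lemma step_term (M d j : ℕ) :
    q ^ (M * (M + j)) * P q (M + d + 1) / (P q M * P q (M + j) * P q (d + 1))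
    = q ^ (M * (M + j)) * P q (M + d) / (P q M * P q (M + j) * P q d)
      + q ^ (M * (M + j)) * q ^ (d + 1) * (1 - q ^ M) * P q (M + d)
        / (P q M * P q (M + j) * P q (d + 1)) := by
  have h1 : P q (M + d + 1) = P q (M + d) * (1 - q ^ (M + d + 1)) := P_succ q (M + d)
  have h2 : P q (d + 1) = P q d * (1 - q ^ (d + 1)) := P_succ q d
  have hM : P q M ≠ 0 := P_ne hq M
  have hMj : P q (M + j) ≠ 0 := P_ne hq (M + j)
  have hd : P q d ≠ 0 := P_ne hq d
  have hd1 : (1 : ℂ) - q ^ (d + 1) ≠ 0 := one_sub_pow_ne hq d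
  rw [h1, h2]
  field_simp
  ring

/-- The Durfee rectangle identity, by induction. -/
lemma durfee : ∀ ℓ j : ℕ,
    ∑ M ∈ range (ℓ + 1), q ^ (M * (M + j)) * P q ℓ / (P q M * P q (M + j) * P q (ℓ - M))
      = 1 / P q (ℓ + j) := by
  intro ℓ
  induction ℓ with
  | zero =>
    intro j
    simp [P_zero]
  | succ ℓ ih =>
    intro j
    rw [Finset.sum_range_succ]
    have hsplit : ∀ M ∈ range (ℓ + 1),
        q ^ (M * (M + j)) * P q (ℓ + 1) / (P q M * P q (M + j) * P q (ℓ + 1 - M))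
        = q ^ (M * (M + j)) * P q ℓ / (P q M * P q (M + j) * P q (ℓ - M))
          + q ^ (M * (M + j)) * q ^ ((ℓ - M) + 1) * (1 - q ^ M) * P q ℓ
            / (P q M * P q (M + j) * P q ((ℓ - M) + 1)) := by
      intro M hM
      have hMl : M ≤ ℓ := by simpa [Nat.lt_succ_iff] using hM
      have e1 : M + (ℓ - M) = ℓ := by omega
      have e2 : ℓ + 1 - M = (ℓ - M) + 1 := by omega
      have := step_term hq M (ℓ - M) j
      rw [e1] at this
      rw [e2]
      exact this
    rw [Finset.sum_congr rfl hsplit, Finset.sum_add_distrib, ih j]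
    -- now handle the second sum
    have hshift : ∑ M ∈ range (ℓ + 1),
        q ^ (M * (M + j)) * q ^ ((ℓ - M) + 1) * (1 - q ^ M) * P q ℓ
          / (P q M * P q (M + j) * P q ((ℓ - M) + 1))
        = q ^ (ℓ + j + 1) *
          ∑ K ∈ range (ℓ + 1), q ^ (K * (K + (j + 1))) * P q ℓ
            / (P q K * P q (K + (j + 1)) * P q (ℓ - K))
          - q ^ (ℓ + j + 1) * (q ^ (ℓ * (ℓ + (j + 1))) / P q (ℓ + j + 1)) := by
      rw [Finset.sum_range_succ']
      have hzero : q ^ (0 * (0 + j)) * q ^ ((ℓ - 0) + 1) * (1 - q ^ 0) * P q ℓ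
          / (P q 0 * P q (0 + j) * P q ((ℓ - 0) + 1)) = 0 := by
        simp
      rw [hzero, add_zero]
      have hterm : ∀ K ∈ range ℓ,
          q ^ ((K+1) * ((K+1) + j)) * q ^ ((ℓ - (K+1)) + 1) * (1 - q ^ (K+1)) * P q ℓ
            / (P q (K+1) * P q ((K+1) + j) * P q ((ℓ - (K+1)) + 1))
          = q ^ (ℓ + j + 1) * (q ^ (K * (K + (j + 1))) * P q ℓ
            / (P q K * P q (K + (j + 1)) * P q (ℓ - K))) := by
        intro K hK
        have hKl : K < ℓ := by simpa using hK
        have e3 : (ℓ - (K+1)) + 1 = ℓ - K := by omega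
        have e4 : (K + 1) + j = K + (j + 1) := by omega
        have hexp2 : (K + 1) * (K + (j + 1)) + (ℓ - K) = (ℓ + j + 1) + K * (K + (j + 1)) := by
          have e5 : (K+1) * (K + (j+1)) = K * (K + (j + 1)) + (K + j + 1) := by ring
          rw [e5]
          generalize K * (K + (j + 1)) = A
          omega
        have hPK : P q (K + 1) = P q K * (1 - q ^ (K + 1)) := P_succ q K
        rw [e3, e4, hPK]
        have h1 : P q K ≠ 0 := P_ne hq K
        have h2 : P q (K + (j+1)) ≠ 0 := P_ne hq _
        have h3 : P q (ℓ - K) ≠ 0 := P_ne hq _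
        have h4 : (1:ℂ) - q ^ (K + 1) ≠ 0 := one_sub_pow_ne hq K
        field_simp
        rw [← pow_add, hexp2, pow_add]
        ring
      rw [Finset.sum_congr rfl hterm, ← Finset.mul_sum]
      -- extend the K-sum to range (ℓ+1)
      have hlast : ∑ K ∈ range (ℓ + 1), q ^ (K * (K + (j + 1))) * P q ℓ
            / (P q K * P q (K + (j + 1)) * P q (ℓ - K))
          = (∑ K ∈ range ℓ, q ^ (K * (K + (j + 1))) * P q ℓ
            / (P q K * P q (K + (j + 1)) * P q (ℓ - K)))
            + q ^ (ℓ * (ℓ + (j + 1))) / P q (ℓ + (j + 1)) := by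
        rw [Finset.sum_range_succ]
        congr 1
        rw [Nat.sub_self, P_zero]
        rw [div_eq_div_iff (by
          exact mul_ne_zero (mul_ne_zero (P_ne hq ℓ) (P_ne hq _)) one_ne_zero) (P_ne hq _)]
        have : ℓ + (j + 1) = ℓ + j + 1 := by omega
        ring
      rw [hlast]
      have : ℓ + (j + 1) = ℓ + j + 1 := by omega
      rw [this]
      ring
    rw [hshift, ih (j + 1)]
    -- final assembly
    have hlastterm : q ^ ((ℓ+1) * ((ℓ+1) + j)) * P q (ℓ+1) / (P q (ℓ+1) * P q ((ℓ+1) + j) * P q (ℓ + 1 - (ℓ+1)))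
        = q ^ ((ℓ+1) * (ℓ + j + 1)) / P q (ℓ + j + 1) := by
      rw [Nat.sub_self, P_zero]
      have e6 : (ℓ+1) + j = ℓ + j + 1 := by omega
      rw [e6]
      have hA : P q (ℓ+1) ≠ 0 := P_ne hq _
      have hB : P q (ℓ+j+1) ≠ 0 := P_ne hq _
      field_simp
    rw [hlastterm]
    have e9 : ℓ + (j + 1) = ℓ + j + 1 := by omega
    rw [e9]
    have e8 : ℓ + 1 + j = ℓ + j + 1 := by omega
    rw [e8]
    have hP1 : P q (ℓ + j + 1) = P q (ℓ + j) * (1 - q ^ (ℓ + j + 1)) := P_succ q (ℓ + j)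
    have h1 : P q (ℓ + j) ≠ 0 := P_ne hq _
    have h2 : (1:ℂ) - q ^ (ℓ + j + 1) ≠ 0 := one_sub_pow_ne hq _
    have hcancel : q ^ (ℓ + j + 1) * (q ^ (ℓ * (ℓ + j + 1)) / P q (ℓ+j+1))
        = q ^ ((ℓ+1) * (ℓ + j + 1)) / P q (ℓ + j + 1) := by
      rw [mul_div_assoc', ← pow_add]
      congr 2
      ring
    rw [hcancel]
    rw [hP1]
    field_simp
    ring

lemma summable_geom_bound {f : ℕ → ℂ} (C : ℝ) (h : ∀ n, ‖f n‖ ≤ C * ‖q‖ ^ n) :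
    Summable f := by
  apply Summable.of_norm
  apply Summable.of_nonneg_of_le (fun n => norm_nonneg _) h
  exact (summable_geometric_of_lt_one (norm_nonneg q) hq).mul_left C

lemma summable_gauss (N t : ℕ) :
    Summable (fun b : ℕ => q ^ ((t+1) * (b+N)) * P q (b+N) / (P q N * P q b)) := by
  obtain ⟨c, hc, hcl⟩ := exists_cl hq
  apply summable_geom_bound hq (Real.exp (‖q‖ / (1 - ‖q‖)) / (c * c))
  intro b
  have hexp : b ≤ (t+1) * (b+N) := by
    calc b ≤ b + N := Nat.le_add_right b N
      _ = 1 * (b + N) := (one_mul _).symm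
      _ ≤ (t+1) * (b+N) := Nat.mul_le_mul_right _ (by omega)
  have h1 : ‖q‖ ^ ((t+1)*(b+N)) ≤ ‖q‖ ^ b :=
    pow_le_pow_of_le_one (norm_nonneg q) hq.le hexp
  have h2 : ‖P q (b+N)‖ ≤ Real.exp (‖q‖ / (1 - ‖q‖)) := norm_P_le hq _
  have h3 : c ≤ ‖P q N‖ := hcl N
  have h4 : c ≤ ‖P q b‖ := hcl b
  rw [norm_div, norm_mul, norm_mul, norm_pow]
  calc ‖q‖ ^ ((t+1)*(b+N)) * ‖P q (b+N)‖ / (‖P q N‖ * ‖P q b‖)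
      ≤ ‖q‖ ^ b * Real.exp (‖q‖ / (1 - ‖q‖)) / (c * c) := by
        apply div_le_div₀ (by positivity)
          (mul_le_mul h1 h2 (norm_nonneg _) (by positivity)) (by positivity)
          (mul_le_mul h3 h4 hc.le (norm_nonneg _))
    _ = Real.exp (‖q‖ / (1 - ‖q‖)) / (c * c) * ‖q‖ ^ b := by ring

lemma gaussGF (t : ℕ) : ∀ N : ℕ,
    ∑' b : ℕ, q ^ ((t+1) * (b+N)) * P q (b+N) / (P q N * P q b)
      = q ^ ((t+1) * N) * P q t / P q (t+1+N) := by
  intro N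
  induction N with
  | zero =>
    have hterm : ∀ b : ℕ, q ^ ((t+1) * (b+0)) * P q (b+0) / (P q 0 * P q b)
        = (q ^ (t+1)) ^ b := by
      intro b
      rw [P_zero, one_mul, add_zero, ← pow_mul]
      rw [mul_div_assoc, div_self (P_ne hq b), mul_one, mul_comm (t+1) b]
    rw [tsum_congr hterm, tsum_geometric_of_norm_lt_one (by
      simpa using norm_pow_lt hq t)]
    rw [mul_zero, pow_zero, one_mul, add_zero]
    rw [P_succ q t, eq_comm]
    rw [div_mul_eq_div_div, div_self (P_ne hq t), one_div]
  | succ N ihN =>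
    have hne1 : (1:ℂ) - q ^ (t+N+2) ≠ 0 := by
      have := one_sub_pow_ne hq (t+N+1)
      simpa [show t+N+1+1 = t+N+2 from by omega] using this
    have hkey : ∀ b : ℕ, q ^ ((t+1) * (b+(N+1))) * P q (b+(N+1)) / (P q (N+1) * P q b)
        = q ^ (t+1) * (q ^ ((t+1) * (b+N)) * P q (b+N) / (P q N * P q b))
          + q ^ ((t+1) * (b+N+1)) * q ^ (N+1) * (1 - q ^ b) * P q (b+N)
            / (P q (N+1) * P q b) := by
      intro b
      have e1 : b + (N+1) = (b+N) + 1 := by omega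
      rw [e1, P_succ q (b+N), P_succ q N]
      have h1 : P q N ≠ 0 := P_ne hq N
      have h2 : P q b ≠ 0 := P_ne hq b
      have h3 : P q (b+N) ≠ 0 := P_ne hq _
      have h4 : (1:ℂ) - q ^ (N+1) ≠ 0 := one_sub_pow_ne hq N
      field_simp
      ring
    have hA : Summable (fun b : ℕ => q ^ (t+1) *
        (q ^ ((t+1) * (b+N)) * P q (b+N) / (P q N * P q b))) :=
      (summable_gauss hq N t).mul_left _
    have hB : Summable (fun b : ℕ => q ^ ((t+1) * (b+N+1)) * q ^ (N+1) * (1 - q ^ b)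
        * P q (b+N) / (P q (N+1) * P q b)) := by
      have := ((summable_gauss hq (N+1) t).congr (fun b => by
        rw [show b + (N+1) = b + N + 1 from by omega])).sub hA
      apply this.congr
      intro b
      have e1 : b + (N+1) = (b+N) + 1 := by omega
      rw [show b + N + 1 = b + (N+1) from by omega, e1, P_succ q (b+N), P_succ q N]
      have h1 : P q N ≠ 0 := P_ne hq N
      have h2 : P q b ≠ 0 := P_ne hq b
      have h3 : P q (b+N) ≠ 0 := P_ne hq _
      have h4 : (1:ℂ) - q ^ (N+1) ≠ 0 := one_sub_pow_ne hq N
      field_simp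
      ring
    have hBsum : ∑' b : ℕ, q ^ ((t+1) * (b+N+1)) * q ^ (N+1) * (1 - q ^ b) * P q (b+N)
        / (P q (N+1) * P q b)
        = q ^ (t+N+2) * ∑' b : ℕ, q ^ ((t+1) * (b+(N+1))) * P q (b+(N+1))
            / (P q (N+1) * P q b) := by
      rw [Summable.tsum_eq_zero_add hB]
      simp only [pow_zero, sub_self, mul_zero, zero_mul, zero_div, zero_add, mul_zero]
      rw [← tsum_mul_left]
      apply tsum_congr
      intro c
      have e2 : c + 1 + N + 1 = (c + (N+1)) + 1 := by omega
      have e3 : c + 1 + N = c + (N + 1) := by omega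
      rw [e2, e3, P_succ q c]
      have e4 : c + (N+1) = (c+N)+1 := by omega
      have h1 : P q (N+1) ≠ 0 := P_ne hq _
      have h2 : P q c ≠ 0 := P_ne hq c
      have h3 : (1:ℂ) - q ^ (c+1) ≠ 0 := one_sub_pow_ne hq c
      field_simp
      have hexp : (t+1) * (c + (N+1) + 1) + (N+1) = (t+N+2) + (t+1) * (c + (N+1)) := by ring
      rw [← pow_add, hexp, pow_add]
      ring
    have hS : (∑' b : ℕ, q ^ ((t+1) * (b+(N+1))) * P q (b+(N+1)) / (P q (N+1) * P q b))
        = q ^ (t+1) * (q ^ ((t+1) * N) * P q t / P q (t+1+N))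
          + q ^ (t+N+2) * ∑' b : ℕ, q ^ ((t+1) * (b+(N+1))) * P q (b+(N+1))
              / (P q (N+1) * P q b) := by
      conv_lhs => rw [tsum_congr hkey]
      rw [Summable.tsum_add hA hB, tsum_mul_left, ihN, hBsum]
    set S := ∑' b : ℕ, q ^ ((t+1) * (b+(N+1))) * P q (b+(N+1)) / (P q (N+1) * P q b) with hSdef
    have h5 : S * (1 - q ^ (t+N+2)) = q ^ ((t+1)*(N+1)) * P q t / P q (t+1+N) := by
      linear_combination hS
    have hPne : P q (t+1+N) ≠ 0 := P_ne hq _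
    field_simp at h5
    have h6 : P q (t+1+(N+1)) = P q (t+1+N) * (1 - q ^ (t+N+2)) := by
      rw [show t+1+(N+1) = (t+1+N)+1 from by omega, P_succ q (t+1+N),
        show t+1+N+1 = t+N+2 from by omega]
    rw [h6, eq_div_iff (mul_ne_zero hPne hne1)]
    linear_combination h5

lemma summable_tele (N : ℕ) :
    Summable (fun t : ℕ => q ^ ((t+1) * (N+1)) * P q t / P q (t+N+2)) := by
  obtain ⟨c, hc, hcl⟩ := exists_cl hq
  apply summable_geom_bound hq (Real.exp (‖q‖ / (1 - ‖q‖)) / c)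
  intro t
  have hexp : t ≤ (t+1) * (N+1) := by
    calc t ≤ t + 1 := by omega
      _ = (t+1) * 1 := (mul_one _).symm
      _ ≤ (t+1) * (N+1) := Nat.mul_le_mul_left _ (by omega)
  have h1 : ‖q‖ ^ ((t+1)*(N+1)) ≤ ‖q‖ ^ t :=
    pow_le_pow_of_le_one (norm_nonneg q) hq.le hexp
  have h2 : ‖P q t‖ ≤ Real.exp (‖q‖ / (1 - ‖q‖)) := norm_P_le hq _
  have h3 : c ≤ ‖P q (t+N+2)‖ := hcl _
  rw [norm_div, norm_mul, norm_pow]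
  calc ‖q‖ ^ ((t+1)*(N+1)) * ‖P q t‖ / ‖P q (t+N+2)‖
      ≤ ‖q‖ ^ t * Real.exp (‖q‖ / (1 - ‖q‖)) / c := by
        apply div_le_div₀ (by positivity)
          (mul_le_mul h1 h2 (norm_nonneg _) (by positivity)) hc h3
    _ = Real.exp (‖q‖ / (1 - ‖q‖)) / c * ‖q‖ ^ t := by ring

lemma teleE (N : ℕ) :
    ∑' t : ℕ, q ^ ((t+1) * (N+1)) * P q t / P q (t+N+2)
      = q ^ (N+1) / ((1 - q ^ (N+1)) * P q (N+1)) := by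
  obtain ⟨c, hc, hcl⟩ := exists_cl hq
  set C : ℕ → ℂ := fun t => q ^ ((t+1)*(N+1)) * P q t / ((1 - q ^ (N+1)) * P q (t+N+1))
    with hCdef
  have hyne : (1:ℂ) - q ^ (N+1) ≠ 0 := one_sub_pow_ne hq N
  have hkey : ∀ t : ℕ, q ^ ((t+1) * (N+1)) * P q t / P q (t+N+2) = C t - C (t+1) := by
    intro t
    rw [hCdef]
    simp only []
    have e1 : t + 1 + N + 1 = (t + N + 1) + 1 := by omega
    rw [e1]
    rw [show t + N + 2 = (t + N + 1) + 1 from by omega]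
    rw [P_succ q (t+N+1), P_succ q t]
    have h1 : P q t ≠ 0 := P_ne hq t
    have h2 : P q (t+N+1) ≠ 0 := P_ne hq _
    have h3 : (1:ℂ) - q ^ (t+N+1+1) ≠ 0 := one_sub_pow_ne hq _
    have h4 : (1:ℂ) - q ^ (t+1) ≠ 0 := one_sub_pow_ne hq t
    field_simp
    have hexp : (t+1+1) * (N+1) = (t+1) * (N+1) + (N+1) := by ring
    rw [hexp, pow_add]
    have hexp2 : t+N+1+1 = (N+1) + (t+1) := by omega
    rw [hexp2, pow_add]
    ring
  have hsum := summable_tele hq N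
  have htendsto1 : Filter.Tendsto (fun n => ∑ i ∈ range n,
      q ^ ((i+1) * (N+1)) * P q i / P q (i+N+2)) Filter.atTop
      (nhds (∑' t : ℕ, q ^ ((t+1) * (N+1)) * P q t / P q (t+N+2))) :=
    hsum.hasSum.tendsto_sum_nat
  have hpartial : ∀ n : ℕ, ∑ i ∈ range n, q ^ ((i+1) * (N+1)) * P q i / P q (i+N+2)
      = C 0 - C n := by
    intro n
    rw [Finset.sum_congr rfl (fun i _ => hkey i)]
    exact Finset.sum_range_sub' C n
  have hC0 : Filter.Tendsto C Filter.atTop (nhds 0) := by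
    apply squeeze_zero_norm (a := fun n : ℕ =>
      Real.exp (‖q‖ / (1 - ‖q‖)) / ((1 - ‖q‖) * c) * ‖q‖ ^ n)
    · intro n
      rw [hCdef]
      simp only []
      have hexp : n ≤ (n+1) * (N+1) := by
        calc n ≤ n + 1 := by omega
          _ = (n+1) * 1 := (mul_one _).symm
          _ ≤ (n+1) * (N+1) := Nat.mul_le_mul_left _ (by omega)
      have h1 : ‖q‖ ^ ((n+1)*(N+1)) ≤ ‖q‖ ^ n :=
        pow_le_pow_of_le_one (norm_nonneg q) hq.le hexp
      have h2 : ‖P q n‖ ≤ Real.exp (‖q‖ / (1 - ‖q‖)) := norm_P_le hq _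
      have h3 : c ≤ ‖P q (n+N+1)‖ := hcl _
      have h4 : 1 - ‖q‖ ≤ ‖1 - q ^ (N+1)‖ := norm_one_sub_pow_ge hq N
      have hr1 : (0:ℝ) < 1 - ‖q‖ := by linarith
      rw [norm_div, norm_mul, norm_mul, norm_pow]
      calc ‖q‖ ^ ((n+1)*(N+1)) * ‖P q n‖ / (‖1 - q ^ (N+1)‖ * ‖P q (n+N+1)‖)
          ≤ ‖q‖ ^ n * Real.exp (‖q‖ / (1 - ‖q‖)) / ((1 - ‖q‖) * c) := by
            apply div_le_div₀ (by positivity)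
              (mul_le_mul h1 h2 (norm_nonneg _) (by positivity)) (by positivity)
              (mul_le_mul h4 h3 hc.le (norm_nonneg _))
        _ = Real.exp (‖q‖ / (1 - ‖q‖)) / ((1 - ‖q‖) * c) * ‖q‖ ^ n := by ring
    · rw [show (0:ℝ) = Real.exp (‖q‖ / (1 - ‖q‖)) / ((1 - ‖q‖) * c) * 0 from by ring]
      exact (tendsto_pow_atTop_nhds_zero_of_lt_one (norm_nonneg q) hq).const_mul _
  have htendsto2 : Filter.Tendsto (fun n => ∑ i ∈ range n,
      q ^ ((i+1) * (N+1)) * P q i / P q (i+N+2)) Filter.atTop (nhds (C 0 - 0)) := by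
    apply Filter.Tendsto.congr (fun n => (hpartial n).symm)
    exact Filter.Tendsto.const_sub _ hC0
  have := tendsto_nhds_unique htendsto1 htendsto2
  rw [this, sub_zero, hCdef]
  simp only []
  rw [P_zero]
  rw [show 0 + N + 1 = N + 1 from by omega]
  norm_num

end basic

/-- q-binomial coefficient with cutoff. -/
noncomputable def Bq (q : ℂ) (l m : ℕ) : ℂ :=
  if m ≤ l then P q l / (P q m * P q (l - m)) else 0

section main
variable {q : ℂ} (hq : ‖q‖ < 1)
include hq

lemma Bq_bound {c : ℝ} (hc : 0 < c) (hcl : ∀ n, c ≤ ‖P q n‖) (l m : ℕ) :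
    ‖Bq q l m‖ ≤ Real.exp (‖q‖ / (1 - ‖q‖)) / (c * c) := by
  unfold Bq
  split_ifs with h
  · rw [norm_div, norm_mul]
    apply div_le_div₀ (by positivity) (norm_P_le hq l) (by positivity)
      (mul_le_mul (hcl m) (hcl (l - m)) hc.le (norm_nonneg _))
  · rw [norm_zero]
    positivity

/-- Durfee square identity in `Bq` form. -/
lemma durfee' (ℓ : ℕ) :
    ∑ M ∈ range (ℓ+1), q ^ ((M+1) * (M+1)) * Bq q (ℓ+1) (M+1) / P q (M+1)
      = 1 / P q (ℓ+1) - 1 := by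
  have h := durfee hq (ℓ+1) 0
  rw [Finset.sum_range_succ'] at h
  have h0 : q ^ (0 * (0 + 0)) * P q (ℓ+1) / (P q 0 * P q (0 + 0) * P q (ℓ + 1 - 0))
      = 1 := by
    simp only [Nat.zero_mul, pow_zero, P_zero, one_mul, Nat.sub_zero, Nat.add_zero]
    rw [div_self (P_ne hq (ℓ+1))]
  rw [h0] at h
  have hterm : ∀ M ∈ range (ℓ+1),
      q ^ ((M+1) * ((M+1) + 0)) * P q (ℓ+1) / (P q (M+1) * P q ((M+1) + 0) * P q (ℓ + 1 - (M+1)))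
      = q ^ ((M+1) * (M+1)) * Bq q (ℓ+1) (M+1) / P q (M+1) := by
    intro M hM
    have hMl : M + 1 ≤ ℓ + 1 := by
      have := Finset.mem_range.1 hM; omega
    rw [Nat.add_zero]
    rw [Bq, if_pos hMl]
    have h1 : P q (M+1) ≠ 0 := P_ne hq _
    have h2 : P q (ℓ + 1 - (M+1)) ≠ 0 := P_ne hq _
    have h3 : P q (ℓ + 1) ≠ 0 := P_ne hq _
    field_simp
  rw [Finset.sum_congr rfl hterm] at h
  have e : ℓ + 1 + 0 = ℓ + 1 := by omega
  rw [e] at h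
  linear_combination h

lemma inner_N (ℓ : ℕ) :
    ∑' N : ℕ, q ^ ((N+1) * (N+1)) * Bq q (ℓ+1) (N+1) / P q (N+1)
      = 1 / P q (ℓ+1) - 1 := by
  rw [tsum_eq_sum (s := range (ℓ+1)) (fun N hN => by
    have : ¬ (N + 1 ≤ ℓ + 1) := by
      have := Finset.mem_range.not.1 hN; omega
    rw [Bq, if_neg this, mul_zero, zero_div])]
  exact durfee' hq ℓ

lemma geom_tsum (m : ℕ) :
    ∑' t : ℕ, q ^ ((m+1) * (t+1)) = q ^ (m+1) * (1 - q ^ (m+1))⁻¹ := by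
  have hterm : ∀ t : ℕ, q ^ ((m+1) * (t+1)) = q ^ (m+1) * (q ^ (m+1)) ^ t := by
    intro t
    rw [← pow_mul, ← pow_add]
    congr 1
    ring
  rw [tsum_congr hterm, tsum_mul_left,
    tsum_geometric_of_norm_lt_one (by simpa using norm_pow_lt hq m)]

/-- Swap first and third coordinates. -/
def flip13 : (ℕ × ℕ × ℕ) ≃ (ℕ × ℕ × ℕ) where
  toFun x := (x.2.2, x.2.1, x.1)
  invFun x := (x.2.2, x.2.1, x.1)
  left_inv x := rfl
  right_inv x := rfl

/-- The triple-sum integrand: coordinates (ℓ, t, N). -/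
noncomputable def gF (q : ℂ) : ℕ × ℕ × ℕ → ℂ := fun x =>
  q ^ ((x.1 + 1) * (x.2.1 + 1)) *
    (q ^ ((x.2.2 + 1) * (x.2.2 + 1)) * Bq q (x.1 + 1) (x.2.2 + 1) / P q (x.2.2 + 1))

omit hq in
lemma gF_apply (l t N : ℕ) : gF q (l, t, N) =
    q ^ ((l + 1) * (t + 1)) *
      (q ^ ((N + 1) * (N + 1)) * Bq q (l + 1) (N + 1) / P q (N + 1)) := rfl

set_option maxHeartbeats 1000000 in
lemma summable_gF : Summable (gF q) := by
  obtain ⟨c, hc, hcl⟩ := exists_cl hq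
  have hr0 : (0:ℝ) ≤ ‖q‖ := norm_nonneg q
  have hE0 : (0:ℝ) < Real.exp (‖q‖ / (1 - ‖q‖)) := Real.exp_pos _
  have hgeo : Summable (fun n : ℕ => ‖q‖ ^ n) := summable_geometric_of_lt_one hr0 hq
  have hcomp : Summable (fun x : ℕ × ℕ × ℕ =>
      Real.exp (‖q‖ / (1 - ‖q‖)) / (c * c * c) *
        (‖q‖ ^ x.1 * (‖q‖ ^ x.2.1 * ‖q‖ ^ x.2.2))) := by
    apply Summable.mul_left
    exact hgeo.mul_of_nonneg
      (hgeo.mul_of_nonneg hgeo (fun n => by positivity) (fun n => by positivity))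
      (fun n => by positivity) (fun p => by positivity)
  apply Summable.of_norm
  apply Summable.of_nonneg_of_le (fun x => norm_nonneg _) _ hcomp
  rintro ⟨l, t, N⟩
  rw [gF_apply, norm_mul, norm_div, norm_mul, norm_pow, norm_pow]
  have h1 : ‖q‖ ^ ((l+1) * (t+1)) ≤ ‖q‖ ^ l * ‖q‖ ^ t := by
    rw [← pow_add]
    apply pow_le_pow_of_le_one hr0 hq.le
    have e : (l+1) * (t+1) = l * t + (l + t) + 1 := by ring
    rw [e]
    generalize l * t = A
    omega
  have h2 : ‖q‖ ^ ((N+1) * (N+1)) ≤ ‖q‖ ^ N := by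
    apply pow_le_pow_of_le_one hr0 hq.le
    have e : (N+1) * (N+1) = N * N + 2 * N + 1 := by ring
    rw [e]
    generalize N * N = A
    omega
  have h3 : ‖Bq q (l+1) (N+1)‖ ≤ Real.exp (‖q‖ / (1 - ‖q‖)) / (c * c) :=
    Bq_bound hq hc hcl _ _
  have h4 : c ≤ ‖P q (N+1)‖ := hcl _
  have hstep2 : ‖q‖ ^ ((N+1) * (N+1)) * ‖Bq q (l+1) (N+1)‖ / ‖P q (N+1)‖
      ≤ ‖q‖ ^ N * (Real.exp (‖q‖ / (1 - ‖q‖)) / (c * c)) / c :=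
    div_le_div₀ (by positivity) (mul_le_mul h2 h3 (norm_nonneg _) (by positivity)) hc h4
  have hstep1 : ‖q‖ ^ ((l+1) * (t+1)) *
        (‖q‖ ^ ((N+1) * (N+1)) * ‖Bq q (l+1) (N+1)‖ / ‖P q (N+1)‖)
      ≤ (‖q‖ ^ l * ‖q‖ ^ t) * (‖q‖ ^ N * (Real.exp (‖q‖ / (1 - ‖q‖)) / (c * c)) / c) :=
    mul_le_mul h1 hstep2 (by positivity) (by positivity)
  refine le_trans hstep1 (le_of_eq ?_)
  field_simp

lemma summable_A : Summable (fun n : ℕ => q ^ (n+1) / (1 - q ^ (n+1))) := by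
  apply summable_geom_bound hq (1 / (1 - ‖q‖))
  intro n
  have hr1 : (0:ℝ) < 1 - ‖q‖ := by linarith
  have h1 : ‖q‖ ^ (n+1) ≤ ‖q‖ ^ n := pow_le_pow_of_le_one (norm_nonneg q) hq.le (by omega)
  have h2 : 1 - ‖q‖ ≤ ‖1 - q ^ (n+1)‖ := norm_one_sub_pow_ge hq n
  rw [norm_div, norm_pow]
  calc ‖q‖ ^ (n+1) / ‖1 - q ^ (n+1)‖ ≤ ‖q‖ ^ n / (1 - ‖q‖) :=
        div_le_div₀ (by positivity) h1 hr1 h2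
    _ = 1 / (1 - ‖q‖) * ‖q‖ ^ n := by ring

lemma summable_C : Summable (fun n : ℕ => q ^ (n+1) / ((1 - q ^ (n+1)) * P q (n+1))) := by
  obtain ⟨c, hc, hcl⟩ := exists_cl hq
  apply summable_geom_bound hq (1 / ((1 - ‖q‖) * c))
  intro n
  have hr1 : (0:ℝ) < 1 - ‖q‖ := by linarith
  have h1 : ‖q‖ ^ (n+1) ≤ ‖q‖ ^ n := pow_le_pow_of_le_one (norm_nonneg q) hq.le (by omega)
  have h2 : 1 - ‖q‖ ≤ ‖1 - q ^ (n+1)‖ := norm_one_sub_pow_ge hq n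
  have h3 : c ≤ ‖P q (n+1)‖ := hcl _
  rw [norm_div, norm_pow, norm_mul]
  calc ‖q‖ ^ (n+1) / (‖1 - q ^ (n+1)‖ * ‖P q (n+1)‖) ≤ ‖q‖ ^ n / ((1 - ‖q‖) * c) :=
        div_le_div₀ (by positivity) h1 (by positivity)
          (mul_le_mul h2 h3 hc.le (norm_nonneg _))
    _ = 1 / ((1 - ‖q‖) * c) * ‖q‖ ^ n := by ring

lemma claim1 :
    ∑' x : ℕ × ℕ × ℕ, gF q x
      = (∑' n : ℕ, q ^ (n+1) / ((1 - q ^ (n+1)) * P q (n+1)))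
        - ∑' n : ℕ, q ^ (n+1) / (1 - q ^ (n+1)) := by
  have hg := summable_gF hq
  rw [Summable.tsum_prod' hg (fun l => hg.prod_factor l)]
  have hl : ∀ l : ℕ, ∑' (p : ℕ × ℕ), gF q (l, p)
      = q ^ (l+1) / ((1 - q ^ (l+1)) * P q (l+1)) - q ^ (l+1) / (1 - q ^ (l+1)) := by
    intro l
    rw [Summable.tsum_prod' (hg.prod_factor l) (fun t => (hg.prod_factor l).prod_factor t)]
    have ht : ∀ t : ℕ, (∑' N : ℕ, gF q (l, t, N))
        = q ^ ((l+1) * (t+1)) * (1 / P q (l+1) - 1) := by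
      intro t
      calc (∑' N : ℕ, gF q (l, t, N))
          = ∑' N : ℕ, q ^ ((l+1)*(t+1)) *
              (q ^ ((N+1)*(N+1)) * Bq q (l+1) (N+1) / P q (N+1)) :=
            tsum_congr fun N => by rw [gF_apply]
        _ = q ^ ((l+1)*(t+1)) *
              ∑' N : ℕ, q ^ ((N+1)*(N+1)) * Bq q (l+1) (N+1) / P q (N+1) := tsum_mul_left
        _ = q ^ ((l+1)*(t+1)) * (1 / P q (l+1) - 1) := by rw [inner_N hq l]
    rw [tsum_congr ht, tsum_mul_right, geom_tsum hq l]
    have h1 : P q (l+1) ≠ 0 := P_ne hq _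
    have h2 : (1:ℂ) - q ^ (l+1) ≠ 0 := one_sub_pow_ne hq l
    field_simp
  rw [tsum_congr hl]
  exact Summable.tsum_sub (summable_C hq) (summable_A hq)

set_option maxHeartbeats 2000000 in
lemma claim2 :
    ∑' x : ℕ × ℕ × ℕ, gF q x
      = ∑' n : ℕ, q ^ ((n+1) * (n+2)) / ((1 - q ^ (n+1)) * P q (n+1) ^ 2) := by
  have hg := summable_gF hq
  have hgE : Summable (fun y : ℕ × ℕ × ℕ => gF q (flip13 y)) :=
    (Equiv.summable_iff flip13).2 hg
  rw [← Equiv.tsum_eq flip13 (gF q)]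
  rw [Summable.tsum_prod' hgE (fun N => hgE.prod_factor N)]
  have hN : ∀ N : ℕ, (∑' (p : ℕ × ℕ), gF q (flip13 (N, p)))
      = q ^ ((N+1) * (N+2)) / ((1 - q ^ (N+1)) * P q (N+1) ^ 2) := by
    intro N
    rw [Summable.tsum_prod' (hgE.prod_factor N) (fun t => (hgE.prod_factor N).prod_factor t)]
    have ht : ∀ t : ℕ, (∑' l : ℕ, gF q (flip13 (N, (t, l))))
        = (q ^ ((N+1)*(N+1)) / P q (N+1)) *
          (q ^ ((t+1) * (N+1)) * P q t / P q (t+N+2)) := by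
      intro t
      have hsec : Summable (fun l : ℕ => gF q (flip13 (N, (t, l)))) :=
        (hgE.prod_factor N).prod_factor t
      have hshape : ∀ l : ℕ, gF q (flip13 (N, (t, l))) = gF q (l, t, N) := fun l => rfl
      rw [tsum_congr hshape]
      rw [← Summable.sum_add_tsum_nat_add (f := fun l => gF q (l, t, N)) N (hsec.congr hshape)]
      have hhead : ∑ i ∈ range N, gF q (i, t, N) = 0 :=
        Finset.sum_eq_zero fun i hi => by
          rw [gF_apply, Bq, if_neg (by have := Finset.mem_range.1 hi; omega),
            mul_zero, zero_div, mul_zero]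
      rw [hhead, zero_add]
      have htail : ∀ b : ℕ, gF q (b + N, t, N)
          = (q ^ ((N+1)*(N+1)) / P q (N+1)) *
            (q ^ ((t+1) * (b + (N+1))) * P q (b + (N+1)) / (P q (N+1) * P q b)) := by
        intro b
        rw [gF_apply, Bq, if_pos (by omega)]
        have e1 : b + N + 1 - (N + 1) = b := by omega
        have e2 : b + N + 1 = b + (N + 1) := by omega
        rw [e1, e2]
        have h1 : P q (N+1) ≠ 0 := P_ne hq _
        have h2 : P q b ≠ 0 := P_ne hq b
        have h3 : P q (b + (N+1)) ≠ 0 := P_ne hq _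
        field_simp
        ring
      rw [tsum_congr htail, tsum_mul_left]
      congr 1
      have hgg := gaussGF hq t (N+1)
      rw [show t + 1 + (N+1) = t + N + 2 from by omega] at hgg
      exact hgg
    rw [tsum_congr ht, tsum_mul_left, teleE hq N]
    have h1 : P q (N+1) ≠ 0 := P_ne hq _
    have h2 : (1:ℂ) - q ^ (N+1) ≠ 0 := one_sub_pow_ne hq N
    field_simp
    ring
  rw [tsum_congr hN]

end main

end Stmt11Aux

/-- Corollary 2.10, generating function form: for |q| < 1,
∑_{n≥1} q^n/(1 − q^n) + ∑_{n≥1} q^{n(n+1)}/((1 − q^n)(q;q)_n²)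
  = ∑_{n≥1} q^n/((1 − q^n)(q;q)_n). -/
theorem stmt11 (q : ℂ) (hq : ‖q‖ < 1) :
    ∑' n : ℕ, q ^ (n + 1) / (1 - q ^ (n + 1)) +
      ∑' n : ℕ, q ^ ((n + 1) * (n + 2)) /
        ((1 - q ^ (n + 1)) * qPoch q q (n + 1) ^ 2) =
      ∑' n : ℕ, q ^ (n + 1) / ((1 - q ^ (n + 1)) * qPoch q q (n + 1)) := by
  have hq' : ‖q‖ < 1 := by exact hq
  simp only [Stmt11Aux.qPoch_eq]
  have h1 := Stmt11Aux.claim1 hq'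
  have h2 := Stmt11Aux.claim2 hq'
  rw [← h2, h1]
  ring
end
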